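/- arXiv:2007.13121 — 14 statements merged into one kernel-verified Lean document; each statement's English description precedes it below -/
import Mathlib

section
/- If S̃ ⊆ {1,…,n} satisfies P(M(S̃) ≤ v) ≤ (1+ε²)·p̃_v + ε² for every v ∈ V_critical, and moreover ℰ ≤ E[M(S*)], then E[M(S̃)] ≥ (1 − 23ε)·E[M(S*)]. -/
open MeasureTheory ProbabilityTheory

/-- `maxVal X S ω = max_{i ∈ S} X i ω`, with value `0` for `S = ∅`. -/
noncomputable def maxVal {Ω : Type*} {n : ℕ} (X : Fin n → Ω → ℝ)
    (S : Finset (Fin n)) (ω : Ω) : ℝ :=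
  (insert (0 : ℝ) (S.image fun i => X i ω)).max' (Finset.insert_nonempty _ _)

/-- The CDF of the maximum: `cdfMax μ X S v = P(max_{i ∈ S} X i ≤ v)`. -/
noncomputable def cdfMax {Ω : Type*} [MeasurableSpace Ω] (μ : MeasureTheory.Measure Ω)
    {n : ℕ} (X : Fin n → Ω → ℝ) (S : Finset (Fin n)) (v : ℝ) : ℝ :=
  (μ {ω | maxVal X S ω ≤ v}).toReal

lemma maxVal_mem' {Ω : Type*} {n : ℕ} (X : Fin n → Ω → ℝ) (S : Finset (Fin n)) (ω : Ω) :
    maxVal X S ω ∈ insert (0 : ℝ) (S.image fun i => X i ω) :=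
  Finset.max'_mem _ _

lemma maxVal_le_iff' {Ω : Type*} {n : ℕ} (X : Fin n → Ω → ℝ) (S : Finset (Fin n)) (ω : Ω)
    {b : ℝ} (hb : 0 ≤ b) : maxVal X S ω ≤ b ↔ ∀ i ∈ S, X i ω ≤ b := by
  rw [maxVal, Finset.max'_le_iff]
  simp [hb]

/-- **Lemma 3.1, non-adaptive ProbeMax.**  Fix `ε ∈ (0,1)` with `1/ε` a
positive integer, `ℰ > 0`, and the support `V = {0, εℰ, …, ℰ/ε}`.  Let `X₁,…,Xₙ` be
independent `V`-valued random variables, `S*` a fixed subset, `v_heavy` the maximal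
`v ∈ V` with `P(M(S*) ≤ v) < 1 − ε²` (with `V_critical = {v ∈ V : v ≤ v_heavy}`, and
`V_critical = V` if no such `v` exists), and `p̃` over-estimates of the CDF of `M(S*)`
on `V_critical` within `2ε²`.  If `S̃` satisfies
`P(M(S̃) ≤ v) ≤ (1+ε²)·p̃_v + ε²` for all `v ∈ V_critical`, and `ℰ ≤ E[M(S*)]`, then
`E[M(S̃)] ≥ (1 − 23ε)·E[M(S*)]`. -/
theorem nonadaptive_probemax_cdf_equivalent_suffices
    {Ω : Type*} [MeasurableSpace Ω] (μ : Measure Ω) [IsProbabilityMeasure μ]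
    (n : ℕ) (ε Escale : ℝ) (mε : ℕ) (hmε : 0 < mε)
    (hε : ε ∈ Set.Ioo (0 : ℝ) 1) (hεint : ε * (mε : ℝ) = 1) (hE : 0 < Escale)
    (V : Finset ℝ)
    (hV : V = (Finset.range (mε ^ 2 + 1)).image fun j : ℕ => (j : ℝ) * ε * Escale)
    (X : Fin n → Ω → ℝ)
    (hmeas : ∀ i, Measurable (X i))
    (hval : ∀ i ω, X i ω ∈ V)
    (hindep : iIndepFun X μ)
    (Sstar Stilde : Finset (Fin n))
    (vheavy : ℝ) (Vcrit : Finset ℝ)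
    (hheavy : (∃ v ∈ V, cdfMax μ X Sstar v < 1 - ε ^ 2) →
      vheavy ∈ V ∧ cdfMax μ X Sstar vheavy < 1 - ε ^ 2 ∧
      (∀ v ∈ V, cdfMax μ X Sstar v < 1 - ε ^ 2 → v ≤ vheavy) ∧
      Vcrit = V.filter fun v => v ≤ vheavy)
    (hnoheavy : (¬ ∃ v ∈ V, cdfMax μ X Sstar v < 1 - ε ^ 2) → Vcrit = V)
    (p : ℝ → ℝ)
    (hp : ∀ v ∈ Vcrit,
      cdfMax μ X Sstar v ≤ p v ∧ p v < cdfMax μ X Sstar v + 2 * ε ^ 2)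
    (hcdfeq : ∀ v ∈ Vcrit, cdfMax μ X Stilde v ≤ (1 + ε ^ 2) * p v + ε ^ 2)
    (hElow : Escale ≤ ∫ ω, maxVal X Sstar ω ∂μ) :
    (1 - 23 * ε) * ∫ ω, maxVal X Sstar ω ∂μ ≤ ∫ ω, maxVal X Stilde ω ∂μ := by
  obtain ⟨hε0, hε1⟩ := hε
  set c : ℝ := ε * Escale with hcdef
  have hc : 0 < c := mul_pos hε0 hE
  -- every value of maxVal is of the form k * c with k ≤ mε^2
  have hrep : ∀ (S : Finset (Fin n)) (ω : Ω),
      ∃ k : ℕ, k ≤ mε ^ 2 ∧ maxVal X S ω = (k : ℝ) * c := by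
    intro S ω
    rcases Finset.mem_insert.1 (maxVal_mem' X S ω) with h0 | hmem
    · exact ⟨0, Nat.zero_le _, by simpa using h0⟩
    · obtain ⟨i, hi, hXi⟩ := Finset.mem_image.1 hmem
      have hvi := hval i ω
      rw [hV] at hvi
      obtain ⟨j, hj, hje⟩ := Finset.mem_image.1 hvi
      have hj' : j < mε ^ 2 + 1 := Finset.mem_range.1 hj
      refine ⟨j, by omega, ?_⟩
      rw [← hXi, ← hje, hcdef]; ring
  have hBmeas : ∀ (S : Finset (Fin n)) (j : ℕ),
      MeasurableSet {ω | maxVal X S ω ≤ (j : ℝ) * c} := by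
    intro S j
    have hb : (0 : ℝ) ≤ (j : ℝ) * c := by positivity
    have hset : {ω | maxVal X S ω ≤ (j : ℝ) * c}
        = ⋂ i ∈ S, {ω | X i ω ≤ (j : ℝ) * c} := by
      ext ω
      simp [maxVal_le_iff' X S ω hb]
    rw [hset]
    exact MeasurableSet.biInter S.countable_toSet
      fun i _ => measurableSet_le (hmeas i) measurable_const
  -- layer-cake formula for the expectation
  have hint : ∀ S : Finset (Fin n),
      ∫ ω, maxVal X S ω ∂μ
        = ∑ j ∈ Finset.range (mε ^ 2), c * (1 - cdfMax μ X S ((j : ℝ) * c)) := by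
    intro S
    set B : ℕ → Set Ω := fun j => {ω | maxVal X S ω ≤ (j : ℝ) * c} with hB
    have hBm : ∀ j, MeasurableSet (B j) := fun j => hBmeas S j
    have hpt : ∀ ω, maxVal X S ω
        = ∑ j ∈ Finset.range (mε ^ 2), ((B j)ᶜ).indicator (fun _ => c) ω := by
      intro ω
      obtain ⟨k, hk, hM⟩ := hrep S ω
      have hmemiff : ∀ j : ℕ, ω ∈ (B j)ᶜ ↔ j < k := by
        intro j
        simp only [hB, Set.mem_compl_iff, Set.mem_setOf_eq, hM, not_le]
        rw [mul_lt_mul_iff_left₀ hc, Nat.cast_lt]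
      have hsum2 : ∑ j ∈ Finset.range (mε ^ 2), ((B j)ᶜ).indicator (fun _ => c) ω
          = ∑ j ∈ Finset.range (mε ^ 2), if j < k then c else 0 := by
        refine Finset.sum_congr rfl fun j _ => ?_
        rw [Set.indicator_apply]
        by_cases h : j < k
        · rw [if_pos ((hmemiff j).2 h), if_pos h]
        · rw [if_neg (fun hm => h ((hmemiff j).1 hm)), if_neg h]
      have hfilt : (Finset.range (mε ^ 2)).filter (fun j => j < k) = Finset.range k := by
        ext j
        simp only [Finset.mem_filter, Finset.mem_range]
        omega
      rw [hsum2, Finset.sum_ite, hfilt, Finset.sum_const, Finset.sum_const_zero,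
        add_zero, Finset.card_range, nsmul_eq_mul, hM]
    rw [integral_congr_ae (Filter.Eventually.of_forall hpt), integral_finset_sum]
    · refine Finset.sum_congr rfl fun j _ => ?_
      rw [integral_indicator_const _ (hBm j).compl]
      have h1 : μ (B j)ᶜ = 1 - μ (B j) := prob_compl_eq_one_sub (hBm j)
      have h2 : (μ (B j)ᶜ).toReal = 1 - (μ (B j)).toReal := by
        rw [h1, ENNReal.toReal_sub_of_le prob_le_one ENNReal.one_ne_top, ENNReal.toReal_one]
      have h3 : cdfMax μ X S ((j : ℝ) * c) = (μ (B j)).toReal := rfl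
      rw [measureReal_def, h2, h3, smul_eq_mul]
      ring
    · intro j _
      exact (integrable_const c).indicator (hBm j).compl
  have hF0 : ∀ (S : Finset (Fin n)) (v : ℝ), 0 ≤ cdfMax μ X S v :=
    fun S v => ENNReal.toReal_nonneg
  have hF1 : ∀ (S : Finset (Fin n)) (v : ℝ), cdfMax μ X S v ≤ 1 := by
    intro S v
    have h := ENNReal.toReal_mono ENNReal.one_ne_top
      (prob_le_one (μ := μ) (s := {ω | maxVal X S ω ≤ v}))
    simpa [cdfMax] using h
  -- pointwise comparison of the CDF terms
  have hstep : ∀ j ∈ Finset.range (mε ^ 2),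
      c * (1 - cdfMax μ X Sstar ((j : ℝ) * c)) - c * 6 * ε ^ 2
        ≤ c * (1 - cdfMax μ X Stilde ((j : ℝ) * c)) := by
    intro j hj
    have hj' : j < mε ^ 2 := Finset.mem_range.1 hj
    have hjV : (j : ℝ) * c ∈ V := by
      rw [hV]
      exact Finset.mem_image.2 ⟨j, Finset.mem_range.2 (by omega), by rw [hcdef]; ring⟩
    have hcore : cdfMax μ X Stilde ((j : ℝ) * c)
        ≤ cdfMax μ X Sstar ((j : ℝ) * c) + 6 * ε ^ 2 := by
      by_cases hcrit : (j : ℝ) * c ∈ Vcrit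
      · have h1 := hcdfeq _ hcrit
        have h2 := (hp _ hcrit).2
        have h3 := hF1 Sstar ((j : ℝ) * c)
        have h4 := hF0 Sstar ((j : ℝ) * c)
        have hε2 : ε ^ 2 ≤ 1 := by nlinarith
        nlinarith
      · by_cases hex : ∃ v ∈ V, cdfMax μ X Sstar v < 1 - ε ^ 2
        · obtain ⟨hvh, hFvh, hmax, hVcrit⟩ := hheavy hex
          have hnle : ¬ ((j : ℝ) * c ≤ vheavy) := by
            intro hle
            exact hcrit (hVcrit ▸ Finset.mem_filter.2 ⟨hjV, hle⟩)
          have hge : 1 - ε ^ 2 ≤ cdfMax μ X Sstar ((j : ℝ) * c) := by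
            by_contra hlt
            exact hnle (hmax _ hjV (lt_of_not_ge hlt))
          have h5 := hF1 Stilde ((j : ℝ) * c)
          nlinarith
        · exact absurd (hnoheavy hex ▸ hjV) hcrit
    nlinarith [mul_le_mul_of_nonneg_left hcore hc.le]
  have hsum := Finset.sum_le_sum hstep
  rw [Finset.sum_sub_distrib, Finset.sum_const, Finset.card_range, nsmul_eq_mul] at hsum
  rw [hint Sstar, hint Stilde] at *
  have hmc : (mε ^ 2 : ℝ) * (c * 6 * ε ^ 2) = 6 * ε * Escale := by
    have : (ε * (mε : ℝ)) ^ 2 = 1 := by rw [hεint]; norm_num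
    rw [hcdef]
    push_cast
    nlinarith
  have hE2 : (0 : ℝ) < ∑ j ∈ Finset.range (mε ^ 2), c * (1 - cdfMax μ X Sstar ((j : ℝ) * c)) :=
    lt_of_lt_of_le hE hElow
  push_cast at hsum
  nlinarith [mul_le_mul_of_nonneg_left hElow hε0.le, hE2.le]
end

section
/- Suppose |S*| ≤ k and, for every v ∈ V_critical, p̃_v ∈ {2ε², 3ε², …, 1 − ε²} satisfies P(M(S*) ≤ v) ≤ p̃_v ≤ P(M(S*) ≤ v) + ε². Then the indicator vector ξ* of S* (ξ*_i = 1 iff i ∈ S*) satisfies ∑_{i=1}^n ξ*_i ≤ k and, for every v ∈ V_critical, ln(1/p̃_v) ≤ ∑_{i=1}^n ℓ_{iv} ξ*_i ≤ (1/ε⁴)·ln(1/p̃_v); in particular ξ* is a (1/ε⁴)-feasible solution of the covering integer program (IP_CDF). -/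
open MeasureTheory ProbabilityTheory
open scoped ENNReal

/-- The load `ℓ_{iv} = ln(1/P(Xᵢ ≤ v)) ∈ [0,∞]`, with `ℓ_{iv} = ∞` when `P(Xᵢ ≤ v) = 0`. -/
noncomputable def load {Ω : Type*} [MeasurableSpace Ω] (μ : MeasureTheory.Measure Ω)
    {n : ℕ} (X : Fin n → Ω → ℝ) (i : Fin n) (v : ℝ) : ℝ≥0∞ :=
  if μ {ω | X i ω ≤ v} = 0 then ⊤
  else ENNReal.ofReal (Real.log (1 / (μ {ω | X i ω ≤ v}).toReal))

/-- **Lemma 3.2, non-adaptive ProbeMax.**  In the ProbeMax setup, suppose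
`|S*| ≤ k` and, for every `v ∈ V_critical`, `p̃_v ∈ {2ε², 3ε², …, 1 − ε²}` satisfies
`P(M(S*) ≤ v) ≤ p̃_v ≤ P(M(S*) ≤ v) + ε²`.  Then the indicator vector `ξ*` of `S*`
satisfies `∑ᵢ ξ*ᵢ ≤ k` and, for every `v ∈ V_critical`,
`ln(1/p̃_v) ≤ ∑ᵢ ℓ_{iv} ξ*ᵢ ≤ (1/ε⁴)·ln(1/p̃_v)`; in particular `ξ*` is a
`(1/ε⁴)`-feasible solution of the covering integer program (IP_CDF). -/
theorem nonadaptive_probemax_optimal_is_rho_feasible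
    {Ω : Type*} [MeasurableSpace Ω] (μ : Measure Ω) [IsProbabilityMeasure μ]
    (n : ℕ) (ε Escale : ℝ) (mε : ℕ) (hmε : 0 < mε)
    (hε : ε ∈ Set.Ioo (0 : ℝ) 1) (hεint : ε * (mε : ℝ) = 1) (hE : 0 < Escale)
    (V : Finset ℝ)
    (hV : V = (Finset.range (mε ^ 2 + 1)).image fun j : ℕ => (j : ℝ) * ε * Escale)
    (X : Fin n → Ω → ℝ)
    (hmeas : ∀ i, Measurable (X i))
    (hval : ∀ i ω, X i ω ∈ V)
    (hindep : iIndepFun X μ)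
    (Sstar : Finset (Fin n)) (k : ℕ) (hk : 0 < k) (hcard : Sstar.card ≤ k)
    (vheavy : ℝ) (Vcrit : Finset ℝ)
    (hheavy : (∃ v ∈ V, cdfMax μ X Sstar v < 1 - ε ^ 2) →
      vheavy ∈ V ∧ cdfMax μ X Sstar vheavy < 1 - ε ^ 2 ∧
      (∀ v ∈ V, cdfMax μ X Sstar v < 1 - ε ^ 2 → v ≤ vheavy) ∧
      Vcrit = V.filter fun v => v ≤ vheavy)
    (hnoheavy : (¬ ∃ v ∈ V, cdfMax μ X Sstar v < 1 - ε ^ 2) → Vcrit = V)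
    (p : ℝ → ℝ)
    (hprange : ∀ v ∈ Vcrit, ∃ j : ℕ, 2 ≤ j ∧ p v = (j : ℝ) * ε ^ 2 ∧ p v ≤ 1 - ε ^ 2)
    (hp : ∀ v ∈ Vcrit,
      cdfMax μ X Sstar v ≤ p v ∧ p v ≤ cdfMax μ X Sstar v + ε ^ 2) :
    (∑ i : Fin n, (if i ∈ Sstar then 1 else 0)) ≤ k ∧
    ∀ v ∈ Vcrit,
      ENNReal.ofReal (Real.log (1 / p v))
          ≤ ∑ i : Fin n, (if i ∈ Sstar then load μ X i v else 0) ∧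
      ∑ i : Fin n, (if i ∈ Sstar then load μ X i v else 0)
          ≤ ENNReal.ofReal ((1 / ε ^ 4) * Real.log (1 / p v)) := by
  obtain ⟨hε0, hε1⟩ := hε
  have hε2pos : (0 : ℝ) < ε ^ 2 := by positivity
  refine ⟨by simpa [Finset.sum_ite_mem] using hcard, ?_⟩
  intro v hv
  -- Vcrit ⊆ V
  have hVsub : Vcrit ⊆ V := by
    by_cases h : ∃ v ∈ V, cdfMax μ X Sstar v < 1 - ε ^ 2
    · rw [(hheavy h).2.2.2]; exact Finset.filter_subset _ _
    · rw [hnoheavy h]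
  have hvV : v ∈ V := hVsub hv
  have hv0 : (0 : ℝ) ≤ v := by
    rw [hV] at hvV
    obtain ⟨j, -, rfl⟩ := Finset.mem_image.mp hvV
    positivity
  -- p v bounds
  obtain ⟨j, hj2, hpval, hple⟩ := hprange v hv
  have hp2 : 2 * ε ^ 2 ≤ p v := by
    rw [hpval]
    have : (2 : ℝ) ≤ (j : ℝ) := by exact_mod_cast hj2
    nlinarith
  obtain ⟨hcle, hcge⟩ := hp v hv
  have hcdfpos : ε ^ 2 ≤ cdfMax μ X Sstar v := by linarith
  have hcpos : (0 : ℝ) < cdfMax μ X Sstar v := lt_of_lt_of_le hε2pos hcdfpos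
  have hppos : (0 : ℝ) < p v := lt_of_lt_of_le hcpos hcle
  -- the set decomposition
  have hset : {ω | maxVal X Sstar ω ≤ v} = ⋂ i ∈ Sstar, X i ⁻¹' Set.Iic v := by
    ext ω
    simp only [Set.mem_setOf_eq, Set.mem_iInter, Set.mem_preimage, Set.mem_Iic]
    constructor
    · intro h i hi
      have h2 : X i ω ≤ (insert (0:ℝ) (Sstar.image fun i => X i ω)).max'
          (Finset.insert_nonempty _ _) :=
        Finset.le_max' _ _ (Finset.mem_insert_of_mem
          (Finset.mem_image_of_mem (fun i => X i ω) hi))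
      exact le_trans h2 h
    · intro h
      apply Finset.max'_le
      intro x hx
      rcases Finset.mem_insert.mp hx with rfl | hx
      · exact hv0
      · obtain ⟨i, hi, rfl⟩ := Finset.mem_image.mp hx
        exact h i hi
  have hprodμ : μ {ω | maxVal X Sstar ω ≤ v} = ∏ i ∈ Sstar, μ (X i ⁻¹' Set.Iic v) := by
    rw [hset]
    exact hindep.measure_inter_preimage_eq_mul Sstar (fun i _ => measurableSet_Iic)
  -- real-valued probabilities
  set q : Fin n → ℝ := fun i => (μ {ω | X i ω ≤ v}).toReal with hq
  have hqset : ∀ i, {ω | X i ω ≤ v} = X i ⁻¹' Set.Iic v := fun i => rfl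
  have hcdfprod : cdfMax μ X Sstar v = ∏ i ∈ Sstar, q i := by
    rw [cdfMax, hprodμ, ENNReal.toReal_prod]
    exact Finset.prod_congr rfl fun i _ => rfl
  have hqle1 : ∀ i, q i ≤ 1 := fun i => by
    simpa [hq] using ENNReal.toReal_mono (by simp) (prob_le_one (μ := μ) (s := {ω | X i ω ≤ v}))
  have hqpos : ∀ i ∈ Sstar, 0 < q i := by
    intro i hi
    rcases lt_or_eq_of_le (ENNReal.toReal_nonneg : 0 ≤ q i) with h | h
    · exact h
    · exfalso
      have : (∏ i ∈ Sstar, q i) = 0 := Finset.prod_eq_zero hi h.symm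
      rw [← hcdfprod] at this
      exact absurd this (ne_of_gt hcpos)
  have hμne : ∀ i ∈ Sstar, μ {ω | X i ω ≤ v} ≠ 0 := by
    intro i hi h
    have := hqpos i hi
    rw [hq] at this
    simp [h] at this
  -- rewrite the sum
  have hsum : (∑ i : Fin n, (if i ∈ Sstar then load μ X i v else 0))
      = ENNReal.ofReal (Real.log (1 / cdfMax μ X Sstar v)) := by
    have h1 : (∑ i : Fin n, (if i ∈ Sstar then load μ X i v else 0))
        = ∑ i ∈ Sstar, load μ X i v := by simp [Finset.sum_ite_mem]
    rw [h1]
    have h2 : ∀ i ∈ Sstar, load μ X i v = ENNReal.ofReal (Real.log (1 / q i)) := by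
      intro i hi
      rw [load, if_neg (hμne i hi)]
    rw [Finset.sum_congr rfl h2, ← ENNReal.ofReal_sum_of_nonneg]
    · congr 1
      have hnz : ∀ i ∈ Sstar, (q i)⁻¹ ≠ 0 := fun i hi => inv_ne_zero (ne_of_gt (hqpos i hi))
      rw [hcdfprod]
      simp only [one_div]
      rw [← Finset.prod_inv_distrib, Real.log_prod hnz]
    · intro i hi
      apply Real.log_nonneg
      rw [one_div]
      exact (one_le_inv₀ (hqpos i hi)).mpr (hqle1 i)
  rw [hsum]
  constructor
  · apply ENNReal.ofReal_le_ofReal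
    apply Real.log_le_log (by positivity)
    exact one_div_le_one_div_of_le hcpos hcle
  · apply ENNReal.ofReal_le_ofReal
    have h1 : Real.log (1 / cdfMax μ X Sstar v) ≤ 1 / ε ^ 2 := by
      have : Real.log (1 / cdfMax μ X Sstar v) ≤ Real.log (1 / ε ^ 2) :=
        Real.log_le_log (by positivity) (one_div_le_one_div_of_le hε2pos hcdfpos)
      have h2 := Real.log_le_sub_one_of_pos (x := 1 / ε ^ 2) (by positivity)
      linarith
    have h2 : ε ^ 2 ≤ Real.log (1 / p v) := by
      have h3 : 1 - ε ^ 2 ≤ Real.exp (-ε ^ 2) := by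
        have := Real.add_one_le_exp (-ε ^ 2); linarith
      have h4 : Real.log (p v) ≤ -ε ^ 2 := by
        calc Real.log (p v) ≤ Real.log (Real.exp (-ε ^ 2)) :=
              Real.log_le_log hppos (by linarith)
          _ = -ε ^ 2 := Real.log_exp _
      rw [one_div, Real.log_inv]
      linarith
    calc Real.log (1 / cdfMax μ X Sstar v) ≤ 1 / ε ^ 2 := h1
      _ = (1 / ε ^ 4) * ε ^ 2 := by field_simp
      _ ≤ (1 / ε ^ 4) * Real.log (1 / p v) := by
          apply mul_le_mul_of_nonneg_left h2 (by positivity)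
end

section
/- For every ε ∈ (0,1) and every real number p with 2ε² ≤ p ≤ 1 − ε², one has ln(1/(p − ε²)) ≤ (1/ε⁴)·ln(1/p). -/
/-- For every `ε ∈ (0,1)` and every real `p` with
`2ε² ≤ p ≤ 1 − ε²`, one has `ln(1/(p − ε²)) ≤ (1/ε⁴) · ln(1/p)`. -/
theorem probemax_log_feasibility_bound (ε p : ℝ) (hε0 : 0 < ε) (hε1 : ε < 1)
    (hp1 : 2 * ε ^ 2 ≤ p) (hp2 : p ≤ 1 - ε ^ 2) :
    Real.log (1 / (p - ε ^ 2)) ≤ (1 / ε ^ 4) * Real.log (1 / p) := by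
  set a := ε ^ 2 with ha_def
  have ha : 0 < a := by positivity
  have ha3 : a ≤ 1 / 3 := by linarith
  have hpa : a ≤ p - a := by linarith
  have hpa0 : 0 < p - a := lt_of_lt_of_le ha hpa
  have hp0 : 0 < p := by linarith
  have key1 : Real.log p ≤ p - 1 := Real.log_le_sub_one_of_pos hp0
  have key2 : Real.log p - Real.log (p - a) ≤ a / (p - a) := by
    have h := Real.log_le_sub_one_of_pos (show 0 < p / (p - a) by positivity)
    rw [Real.log_div (ne_of_gt hp0) (ne_of_gt hpa0)] at h
    have : p / (p - a) - 1 = a / (p - a) := by field_simp; ring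
    linarith [this ▸ h]
  have hfrac : a / (p - a) ≤ 1 := by
    rw [div_le_one hpa0]; linarith
  simp only [one_div, Real.log_inv]
  have hε4 : ε ^ 4 = a ^ 2 := by rw [ha_def]; ring
  rw [hε4]
  -- goal: -Real.log (p - a) ≤ (a^2)⁻¹ * -Real.log p
  have hL : a ≤ -Real.log p := by linarith
  have ha2 : (0:ℝ) < a ^ 2 := by positivity
  rw [← sub_nonneg]
  have expand : (a ^ 2)⁻¹ * -Real.log p - -Real.log (p - a)
      = ((1 - a ^ 2) * (-Real.log p) - a ^ 2 * (Real.log p - Real.log (p - a))) / a ^ 2 := by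
    field_simp; ring
  rw [expand]
  apply div_nonneg _ (le_of_lt ha2)
  have h1 : a * (1 - a ^ 2) ≤ (1 - a ^ 2) * (-Real.log p) := by
    have : (0:ℝ) ≤ 1 - a ^ 2 := by nlinarith
    nlinarith
  have h2 : a ^ 2 * (Real.log p - Real.log (p - a)) ≤ a ^ 2 := by
    nlinarith [key2, hfrac, ha2]
  nlinarith [h1, h2]
end

section
/- For every ε ∈ (0,1) and every real number p with 0 ≤ p ≤ 1, one has p^{1 − ε³/6} ≤ (1 + ε²)·p + ε². -/
/-- For every `ε ∈ (0,1)` and every real `p ∈ [0,1]`,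
`p ^ (1 − ε³/6) ≤ (1 + ε²)·p + ε²`.  (Here `^` is the real power `Real.rpow`,
so for `p = 0` the left-hand side is `0`.) -/
theorem probemax_rpow_cdf_bound (ε p : ℝ) (hε0 : 0 < ε) (hε1 : ε < 1)
    (hp0 : 0 ≤ p) (hp1 : p ≤ 1) :
    p ^ (1 - ε ^ 3 / 6) ≤ (1 + ε ^ 2) * p + ε ^ 2 := by
  have hδ0 : (0:ℝ) ≤ ε ^ 3 / 6 := by positivity
  have hδ1 : ε ^ 3 / 6 ≤ ε ^ 2 := by nlinarith [pow_pos hε0 2, pow_pos hε0 3]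
  have hw1 : (0:ℝ) ≤ 1 - ε ^ 3 / 6 := by nlinarith [pow_pos hε0 2]
  have key := Real.geom_mean_le_arith_mean2_weighted hw1 hδ0 hp0 zero_le_one
    (by ring)
  have h1 : (1:ℝ) ^ (ε ^ 3 / 6) = 1 := Real.one_rpow _
  rw [h1, mul_one, mul_one] at key
  nlinarith [mul_nonneg hδ0 (sub_nonneg.2 hp1), mul_nonneg (sq_nonneg ε) hp0]
end

section
/- Suppose that for every v ∈ V_critical, p̃_v ∈ {2ε², 3ε², …, 1 − ε²}, and that ξ ∈ {0,1}ⁿ satisfies ∑_{i=1}^n ℓ_{iv} ξ_i ≥ (1 − ε³/6)·ln(1/p̃_v) for every v ∈ V_critical (the sum taken as ∞ if any term with ξ_i = 1 is infinite). Then the set S̃ = {i : ξ_i = 1} satisfies P(M(S̃) ≤ v) ≤ (1 + ε²)·p̃_v + ε² for every v ∈ V_critical. -/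
open MeasureTheory ProbabilityTheory
open scoped ENNReal

open MeasureTheory ProbabilityTheory
open scoped ENNReal

lemma exp_le_one_add_two_mul {x : ℝ} (h0 : 0 ≤ x) (h1 : x ≤ 1/2) :
    Real.exp x ≤ 1 + 2 * x := by
  have h2 : 1 - x ≤ Real.exp (-x) := by have := Real.add_one_le_exp (-x); linarith
  have h3 : 0 < 1 - x := by linarith
  have h4 : Real.exp x ≤ 1 / (1 - x) := by
    rw [le_div_iff₀ h3]
    calc Real.exp x * (1 - x) ≤ Real.exp x * Real.exp (-x) := by
          exact mul_le_mul_of_nonneg_left h2 (Real.exp_pos x).le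
      _ = 1 := by rw [← Real.exp_add]; simp
  refine h4.trans ?_
  rw [div_le_iff₀ h3]
  nlinarith

lemma key_ineq {ε q : ℝ} (hε0 : 0 < ε) (hε1 : ε < 1) (hp2 : 2 * ε^2 ≤ q) (hp1 : q ≤ 1 - ε^2) :
    q ^ (1 - ε^3/6 : ℝ) ≤ (1 + ε^2) * q := by
  have hq0 : 0 < q := by nlinarith
  have hq1 : q ≤ 1 := by nlinarith
  set x : ℝ := (ε^3/6) * Real.log (1/q) with hx
  have hlog0 : 0 ≤ Real.log (1/q) := Real.log_nonneg (by rw [le_div_iff₀ hq0]; linarith)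
  have hx0 : 0 ≤ x := by positivity
  have hxle : x ≤ ε^2/3 := by
    have h1 : Real.log (1/q) ≤ Real.log (1/ε^2) := by
      apply Real.log_le_log (by positivity)
      apply div_le_div_of_nonneg_left one_pos.le (by positivity) (by nlinarith)
    have h2 : Real.log (1/ε^2) = 2 * Real.log (1/ε) := by
      rw [one_div, one_div, Real.log_inv, Real.log_inv, Real.log_pow]
      push_cast; ring
    have h3 : Real.log (1/ε) ≤ 1/ε := by
      have := Real.log_le_sub_one_of_pos (x := 1/ε) (by positivity)
      linarith
    have h4 : Real.log (1/q) ≤ 2/ε := by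
      rw [h2] at h1
      calc Real.log (1/q) ≤ 2 * Real.log (1/ε) := h1
        _ ≤ 2 * (1/ε) := by linarith
        _ = 2/ε := by ring
    calc x ≤ (ε^3/6) * (2/ε) := mul_le_mul_of_nonneg_left h4 (by positivity)
      _ = ε^2/3 := by field_simp; ring
  have heq : q ^ (1 - ε^3/6 : ℝ) = q * Real.exp x := by
    rw [Real.rpow_def_of_pos hq0, hx]
    rw [Real.log_div one_ne_zero hq0.ne', Real.log_one]
    rw [← Real.exp_log hq0]
    rw [← Real.exp_add]
    congr 1
    rw [Real.log_exp]
    ring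
  rw [heq]
  have hexp : Real.exp x ≤ 1 + 2 * x := exp_le_one_add_two_mul hx0 (by nlinarith)
  calc q * Real.exp x ≤ q * (1 + 2 * x) := mul_le_mul_of_nonneg_left hexp hq0.le
    _ ≤ q * (1 + ε^2) := by
        apply mul_le_mul_of_nonneg_left _ hq0.le
        nlinarith
    _ = (1 + ε^2) * q := by ring

/-- **non-adaptive ProbeMax: approximate covering implies
CDF-equivalence.**  Suppose for every `v ∈ V_critical`,
`p̃_v ∈ {2ε², 3ε², …, 1 − ε²}`, and `ξ ∈ {0,1}ⁿ` satisfies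
`∑ᵢ ℓ_{iv} ξᵢ ≥ (1 − ε³/6)·ln(1/p̃_v)` (the sum in `[0,∞]`).  Then
`S̃ = {i : ξᵢ = 1}` satisfies `P(M(S̃) ≤ v) ≤ (1 + ε²)·p̃_v + ε²` for every
`v ∈ V_critical`. -/
theorem nonadaptive_probemax_rounded_is_cdf_equivalent
    {Ω : Type*} [MeasurableSpace Ω] (μ : Measure Ω) [IsProbabilityMeasure μ]
    (n : ℕ) (ε Escale : ℝ) (mε : ℕ) (hmε : 0 < mε)
    (hε : ε ∈ Set.Ioo (0 : ℝ) 1) (hεint : ε * (mε : ℝ) = 1) (hE : 0 < Escale)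
    (V : Finset ℝ)
    (hV : V = (Finset.range (mε ^ 2 + 1)).image fun j : ℕ => (j : ℝ) * ε * Escale)
    (X : Fin n → Ω → ℝ)
    (hmeas : ∀ i, Measurable (X i))
    (hval : ∀ i ω, X i ω ∈ V)
    (hindep : iIndepFun X μ)
    (Vcrit : Finset ℝ) (hVcrit : Vcrit ⊆ V)
    (p : ℝ → ℝ)
    (hprange : ∀ v ∈ Vcrit, ∃ j : ℕ, 2 ≤ j ∧ p v = (j : ℝ) * ε ^ 2 ∧ p v ≤ 1 - ε ^ 2)
    (ξ : Fin n → ℕ) (hξ : ∀ i, ξ i = 0 ∨ ξ i = 1)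
    (hcover : ∀ v ∈ Vcrit,
      ENNReal.ofReal ((1 - ε ^ 3 / 6) * Real.log (1 / p v))
        ≤ ∑ i : Fin n, (ξ i : ℝ≥0∞) * load μ X i v)
    (Stilde : Finset (Fin n))
    (hStilde : Stilde = Finset.univ.filter fun i => ξ i = 1) :
    ∀ v ∈ Vcrit, cdfMax μ X Stilde v ≤ (1 + ε ^ 2) * p v + ε ^ 2 := by
  intro v hv
  obtain ⟨hε0, hε1⟩ := hε
  obtain ⟨j, hj2, hpj, hp1⟩ := hprange v hv
  have hp2 : 2 * ε ^ 2 ≤ p v := by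
    rw [hpj]
    have : (2 : ℝ) ≤ (j : ℝ) := by exact_mod_cast hj2
    nlinarith
  have hp0 : 0 < p v := by nlinarith
  have hε2 : (0:ℝ) ≤ ε ^ 2 := by positivity
  -- v ≥ 0
  have hv0 : 0 ≤ v := by
    have := hVcrit hv
    rw [hV] at this
    simp only [Finset.mem_image, Finset.mem_range] at this
    obtain ⟨k, _, hk⟩ := this
    rw [← hk]; positivity
  -- the event sets
  set A : Fin n → Set Ω := fun i => {ω | X i ω ≤ v} with hA
  have hAmeas : ∀ i, MeasurableSet[MeasurableSpace.comap (X i) inferInstance] (A i) := by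
    intro i
    exact ⟨Set.Iic v, measurableSet_Iic, rfl⟩
  -- rewrite cdfMax as a product
  have hset : {ω | maxVal X Stilde ω ≤ v} = ⋂ i ∈ Stilde, A i := by
    ext ω
    simp only [Set.mem_setOf_eq, maxVal, Finset.max'_le_iff, Set.mem_iInter, hA,
      Finset.mem_insert, Finset.mem_image]
    constructor
    · intro h i hi
      exact h _ (Or.inr ⟨i, hi, rfl⟩)
    · rintro h y (rfl | ⟨i, hi, rfl⟩)
      · exact hv0
      · exact h i hi
  have hprod : μ {ω | maxVal X Stilde ω ≤ v} = ∏ i ∈ Stilde, μ (A i) := by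
    rw [hset]
    exact hindep.meas_biInter fun i _ => hAmeas i
  -- case on whether some factor is zero
  by_cases hzero : ∃ i ∈ Stilde, μ (A i) = 0
  · obtain ⟨i, hi, h0⟩ := hzero
    have : μ {ω | maxVal X Stilde ω ≤ v} = 0 := by
      rw [hprod]; exact Finset.prod_eq_zero hi h0
    rw [cdfMax, this]
    simp only [ENNReal.toReal_zero]
    nlinarith
  push_neg at hzero
  -- real-valued probabilities
  set r : Fin n → ℝ := fun i => (μ (A i)).toReal with hr
  have hrpos : ∀ i ∈ Stilde, 0 < r i := by
    intro i hi
    have h1 : μ (A i) ≠ 0 := hzero i hi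
    have h2 : μ (A i) ≠ ⊤ := measure_ne_top μ _
    simp [hr, ENNReal.toReal_pos h1 h2]
  have hrle1 : ∀ i, r i ≤ 1 := by
    intro i
    simp only [hr]
    exact ENNReal.toReal_le_of_le_ofReal one_pos.le (by simpa using prob_le_one (μ := μ) (s := A i))
  -- loads on Stilde
  have hload : ∀ i ∈ Stilde, load μ X i v = ENNReal.ofReal (Real.log (1 / r i)) := by
    intro i hi
    rw [load, if_neg (hzero i hi)]
  have hlognn : ∀ i ∈ Stilde, 0 ≤ Real.log (1 / r i) := by
    intro i hi
    apply Real.log_nonneg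
    rw [le_div_iff₀ (hrpos i hi)]
    simpa using hrle1 i
  -- the covering sum equals a sum over Stilde
  have hsum : ∑ i : Fin n, (ξ i : ℝ≥0∞) * load μ X i v
      = ENNReal.ofReal (∑ i ∈ Stilde, Real.log (1 / r i)) := by
    rw [ENNReal.ofReal_sum_of_nonneg hlognn]
    rw [show ∑ i : Fin n, (ξ i : ℝ≥0∞) * load μ X i v
        = ∑ i : Fin n, if i ∈ Stilde then load μ X i v else 0 from ?_]
    · rw [Finset.sum_ite_mem, Finset.univ_inter]
      exact Finset.sum_congr rfl hload
    · apply Finset.sum_congr rfl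
      intro i _
      by_cases hi : i ∈ Stilde
      · have : ξ i = 1 := by
          rw [hStilde] at hi; simpa using hi
        simp [hi, this]
      · have : ξ i = 0 := by
          rcases hξ i with h | h
          · exact h
          · exfalso; apply hi; rw [hStilde]; simp [h]
        simp [hi, this]
  -- derive the real inequality on the sum of logs
  have hcov := hcover v hv
  rw [hsum] at hcov
  have hsumlog : (1 - ε ^ 3 / 6) * Real.log (1 / p v) ≤ ∑ i ∈ Stilde, Real.log (1 / r i) := by
    rw [ENNReal.ofReal_le_ofReal_iff (Finset.sum_nonneg hlognn)] at hcov
    exact hcov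
  -- product bound
  have hprodpos : 0 < ∏ i ∈ Stilde, r i := Finset.prod_pos hrpos
  have hlogprod : Real.log (∏ i ∈ Stilde, r i) ≤ (1 - ε ^ 3 / 6) * Real.log (p v) := by
    rw [Real.log_prod fun i hi => (hrpos i hi).ne']
    have h1 : ∀ i ∈ Stilde, Real.log (r i) = -Real.log (1 / r i) := by
      intro i hi
      rw [one_div, Real.log_inv, neg_neg]
    rw [Finset.sum_congr rfl h1, Finset.sum_neg_distrib]
    have h2 : Real.log (1 / p v) = -Real.log (p v) := by
      rw [one_div, Real.log_inv]
    rw [h2] at hsumlog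
    linarith
  have hprodle : ∏ i ∈ Stilde, r i ≤ p v ^ (1 - ε ^ 3 / 6 : ℝ) := by
    rw [Real.rpow_def_of_pos hp0, mul_comm]
    calc ∏ i ∈ Stilde, r i = Real.exp (Real.log (∏ i ∈ Stilde, r i)) :=
          (Real.exp_log hprodpos).symm
      _ ≤ Real.exp ((1 - ε ^ 3 / 6) * Real.log (p v)) := Real.exp_le_exp.mpr hlogprod
  -- assemble
  have hcdf : cdfMax μ X Stilde v = ∏ i ∈ Stilde, r i := by
    rw [cdfMax, hprod, ENNReal.toReal_prod]
  rw [hcdf]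
  have := key_ineq hε0 hε1 hp2 hp1
  linarith
end

section
/- Let ε > 0 and δ > 0. Let T₁,…,T_N be pairwise disjoint finite sets of jobs, and for each t ∈ {1,…,N} let qₜ ≥ 1 be an integer such that the load ℓ_j of every job j ∈ Tₜ satisfies (1+ε)^{qₜ−1}·δ < ℓ_j ≤ (1+ε)^{qₜ}·δ. Let x̂_j ∈ {0,1} and y_j ∈ [0,1] be numbers with ∑_{j∈Tₜ} y_j = ∑_{j∈Tₜ} x̂_j =: k̂ₜ (an integer) for every t, and let Y_j ∈ {0,1} satisfy ∑_{j∈Tₜ} Y_j ≥ ⌊∑_{j∈Tₜ} y_j⌋ for every t. Then ∑_{t=1}^N ∑_{j∈Tₜ} ℓ_j Y_j ≥ (1/(1+ε))·∑_{t=1}^N ∑_{j∈Tₜ} ℓ_j x̂_j ≥ (1−ε)·∑_{t=1}^N ∑_{j∈Tₜ} ℓ_j x̂_j. -/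
/-- Jobs are classified into types `T₁,…,T_N` by geometric load segments
`((1+ε)^{qₜ−1}δ, (1+ε)^{qₜ}δ]`; the fractional solution `y` matches the integral per-type
counts `k̂ₜ` of the 0/1 solution `x̂`, and the rounded 0/1 variables `Y` preserve the
per-type degrees up to rounding down.  Then
`∑ₜ ∑_{j∈Tₜ} ℓⱼ Yⱼ ≥ (1/(1+ε))·∑ₜ ∑_{j∈Tₜ} ℓⱼ x̂ⱼ ≥ (1−ε)·∑ₜ ∑_{j∈Tₜ} ℓⱼ x̂ⱼ`. -/
theorem santa_claus_heavy_types_bound {J : Type*} [DecidableEq J]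
    (ε δ : ℝ) (hε : 0 < ε) (hδ : 0 < δ)
    (N : ℕ) (T : Fin N → Finset J)
    (hdisj : ∀ s t : Fin N, s ≠ t → Disjoint (T s) (T t))
    (q : Fin N → ℕ) (hq : ∀ t, 1 ≤ q t)
    (ℓ : J → ℝ)
    (hℓ : ∀ t : Fin N, ∀ j ∈ T t,
      (1 + ε) ^ (q t - 1) * δ < ℓ j ∧ ℓ j ≤ (1 + ε) ^ (q t) * δ)
    (xhat y Y : J → ℝ)
    (hxhat : ∀ j, xhat j = 0 ∨ xhat j = 1)
    (hy : ∀ j, 0 ≤ y j ∧ y j ≤ 1)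
    (hY : ∀ j, Y j = 0 ∨ Y j = 1)
    (khat : Fin N → ℕ)
    (hky : ∀ t, ∑ j ∈ T t, y j = (khat t : ℝ))
    (hkx : ∀ t, ∑ j ∈ T t, xhat j = (khat t : ℝ))
    (hdeg : ∀ t, (⌊∑ j ∈ T t, y j⌋ : ℝ) ≤ ∑ j ∈ T t, Y j) :
    (1 / (1 + ε)) * (∑ t : Fin N, ∑ j ∈ T t, ℓ j * xhat j)
        ≤ ∑ t : Fin N, ∑ j ∈ T t, ℓ j * Y j ∧
    (1 - ε) * (∑ t : Fin N, ∑ j ∈ T t, ℓ j * xhat j)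
        ≤ (1 / (1 + ε)) * (∑ t : Fin N, ∑ j ∈ T t, ℓ j * xhat j) := by
  have h1ε : (0:ℝ) < 1 + ε := by linarith
  -- nonnegativity of the xhat sum
  have hterm_nonneg : ∀ t : Fin N, ∀ j ∈ T t, 0 ≤ ℓ j * xhat j := by
    intro t j hj
    have hℓpos : 0 < ℓ j := lt_trans (by positivity) (hℓ t j hj).1
    rcases hxhat j with h | h <;> simp [h, le_of_lt hℓpos]
  have hsum_nonneg : 0 ≤ ∑ t : Fin N, ∑ j ∈ T t, ℓ j * xhat j :=
    Finset.sum_nonneg fun t _ => Finset.sum_nonneg fun j hj => hterm_nonneg t j hj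
  constructor
  · rw [Finset.mul_sum]
    apply Finset.sum_le_sum
    intro t _
    have hB : ∑ j ∈ T t, ℓ j * xhat j ≤ (1 + ε) ^ (q t) * δ * (khat t : ℝ) := by
      calc ∑ j ∈ T t, ℓ j * xhat j ≤ ∑ j ∈ T t, (1 + ε) ^ (q t) * δ * xhat j := by
            apply Finset.sum_le_sum
            intro j hj
            have hx0 : 0 ≤ xhat j := by rcases hxhat j with h | h <;> simp [h]
            exact mul_le_mul_of_nonneg_right (hℓ t j hj).2 hx0
        _ = (1 + ε) ^ (q t) * δ * (khat t : ℝ) := by rw [← Finset.mul_sum, hkx t]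
    have hL : (1 + ε) ^ (q t - 1) * δ * (khat t : ℝ) ≤ ∑ j ∈ T t, ℓ j * Y j := by
      have hYk : (khat t : ℝ) ≤ ∑ j ∈ T t, Y j := by
        have := hdeg t
        rwa [hky t, Int.floor_natCast, Int.cast_natCast] at this
      calc (1 + ε) ^ (q t - 1) * δ * (khat t : ℝ)
          ≤ (1 + ε) ^ (q t - 1) * δ * ∑ j ∈ T t, Y j :=
            mul_le_mul_of_nonneg_left hYk (by positivity)
        _ = ∑ j ∈ T t, (1 + ε) ^ (q t - 1) * δ * Y j := Finset.mul_sum _ _ _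
        _ ≤ ∑ j ∈ T t, ℓ j * Y j := by
            apply Finset.sum_le_sum
            intro j hj
            have hY0 : 0 ≤ Y j := by rcases hY j with h | h <;> simp [h]
            exact mul_le_mul_of_nonneg_right (le_of_lt (hℓ t j hj).1) hY0
    have hpow : (1 + ε) ^ (q t) = (1 + ε) ^ (q t - 1) * (1 + ε) := by
      rw [← pow_succ, Nat.sub_add_cancel (hq t)]
    calc (1 / (1 + ε)) * ∑ j ∈ T t, ℓ j * xhat j
        ≤ (1 / (1 + ε)) * ((1 + ε) ^ (q t) * δ * (khat t : ℝ)) :=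
          mul_le_mul_of_nonneg_left hB (by positivity)
      _ = (1 + ε) ^ (q t - 1) * δ * (khat t : ℝ) := by
          rw [hpow]; field_simp
      _ ≤ ∑ j ∈ T t, ℓ j * Y j := hL
  · apply mul_le_mul_of_nonneg_right _ hsum_nonneg
    rw [le_div_iff₀ h1ε]
    nlinarith [sq_nonneg ε]
end

section
/- With probability at least 1 − α, one has ∑_{t=1}^N ∑_{j∈Tₜ} ℓ_j Y_j ≥ (1−ε)²·max{L̂ − ε, 0}. -/
open MeasureTheory

/-- **Claim 1 of the Santa Claus rounding analysis.**
Jobs in the disjoint types `T₁,…,T_N` have small loads `ℓⱼ ∈ [0,δ]`, the fractional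
solution `y*` has total load at least `L̂` whenever `L̂ ≥ ε`, and
`exp(−ε⁴/(2δN)) ≤ α/N`.  If the rounded 0/1 random variables `Yⱼ` satisfy the marginal
property (P1) `E[Yⱼ] = y*ⱼ` and the concentration property (P3), then with probability
at least `1 − α` one has `∑ₜ ∑_{j∈Tₜ} ℓⱼ Yⱼ ≥ (1−ε)²·max{L̂ − ε, 0}`. -/
theorem santa_claus_light_types_concentration {Ω : Type*} [MeasurableSpace Ω]
    (μ : Measure Ω) [IsProbabilityMeasure μ] {J : Type*} [DecidableEq J]
    (ε δ α Lhat : ℝ)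
    (hε : ε ∈ Set.Ioo (0 : ℝ) 1) (hδ : 0 < δ) (hα : α ∈ Set.Ioc (0 : ℝ) 1)
    (hL : 0 ≤ Lhat)
    (N : ℕ) (T : Fin N → Finset J)
    (hdisj : ∀ s t : Fin N, s ≠ t → Disjoint (T s) (T t))
    (ℓ : J → ℝ) (hℓ : ∀ j, 0 ≤ ℓ j ∧ ℓ j ≤ δ)
    (ystar : J → ℝ) (hy : ∀ j, 0 ≤ ystar j ∧ ystar j ≤ 1)
    (hyload : ε ≤ Lhat → Lhat ≤ ∑ t : Fin N, ∑ j ∈ T t, ℓ j * ystar j)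
    (hδsmall : Real.exp (-(ε ^ 4 / (2 * δ * N))) ≤ α / N)
    (Y : J → Ω → ℝ)
    (hYmeas : ∀ j, Measurable (Y j))
    (hY01 : ∀ j ω, Y j ω = 0 ∨ Y j ω = 1)
    (hP1 : ∀ j, (∫ ω, Y j ω ∂μ) = ystar j)
    (hP3 : ∀ t : Fin N, ∀ a : J → ℝ, (∀ j ∈ T t, 0 ≤ a j ∧ a j ≤ 1) →
      ∀ m : ℝ, m ≤ (∫ ω, ∑ j ∈ T t, a j * Y j ω ∂μ) →
        (μ {ω | ∑ j ∈ T t, a j * Y j ω ≤ (1 - ε) * m}).toReal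
          ≤ Real.exp (-(m * ε ^ 2 / 2))) :
    1 - α ≤ (μ {ω |
      (1 - ε) ^ 2 * max (Lhat - ε) 0 ≤ ∑ t : Fin N, ∑ j ∈ T t, ℓ j * Y j ω}).toReal := by
  classical
  obtain ⟨hε0, hε1⟩ := hε
  obtain ⟨hα0, hα1⟩ := hα
  have hYnn : ∀ j ω, 0 ≤ Y j ω := by
    intro j ω; rcases hY01 j ω with h | h <;> rw [h] <;> norm_num
  have hsum_nonneg : ∀ ω : Ω, 0 ≤ ∑ t : Fin N, ∑ j ∈ T t, ℓ j * Y j ω := fun ω =>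
    Finset.sum_nonneg fun t _ => Finset.sum_nonneg fun j _ => mul_nonneg (hℓ j).1 (hYnn j ω)
  by_cases hLε : ε ≤ Lhat
  · -- main case
    have hN : 0 < N := by
      by_contra h
      have hN0 : N = 0 := by omega
      subst hN0
      norm_num at hδsmall
    have hNR : (0:ℝ) < N := by exact_mod_cast hN
    have hInt : ∀ j, Integrable (Y j) μ := by
      intro j
      refine (integrable_const (1:ℝ)).mono' (hYmeas j).aestronglyMeasurable (ae_of_all μ ?_)
      intro ω; rcases hY01 j ω with h | h <;> rw [h] <;> norm_num
    set Lt : Fin N → ℝ := fun t => ∑ j ∈ T t, ℓ j * ystar j with hLt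
    have hEsum : ∀ t : Fin N, (∫ ω, ∑ j ∈ T t, (ℓ j / δ) * Y j ω ∂μ) = Lt t / δ := by
      intro t
      rw [integral_finset_sum _ (fun j _ => ((hInt j).const_mul _)), hLt]
      simp only [Finset.sum_div]
      refine Finset.sum_congr rfl fun j _ => ?_
      rw [integral_const_mul, hP1 j]; ring
    set S : Finset (Fin N) := Finset.univ.filter (fun t => ε^2/N ≤ Lt t) with hS
    set B : Fin N → Set Ω := fun t =>
      {ω | ∑ j ∈ T t, (ℓ j / δ) * Y j ω ≤ (1 - ε) * (Lt t / δ)} with hB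
    have hBbound : ∀ t ∈ S, (μ (B t)).toReal ≤ α / N := by
      intro t ht
      have habd : ∀ j ∈ T t, 0 ≤ ℓ j / δ ∧ ℓ j / δ ≤ 1 := fun j _ =>
        ⟨div_nonneg (hℓ j).1 hδ.le, (div_le_one hδ).mpr (hℓ j).2⟩
      have h1 := hP3 t (fun j => ℓ j / δ) habd (Lt t / δ) (le_of_eq (hEsum t).symm)
      have hexp : Real.exp (-(Lt t / δ * ε ^ 2 / 2)) ≤ Real.exp (-(ε ^ 4 / (2 * δ * N))) := by
        rw [Real.exp_le_exp, neg_le_neg_iff]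
        have htS : ε^2/N ≤ Lt t := by
          have := (Finset.mem_filter.mp (hS ▸ ht)).2
          exact this
        have hm : ε^2/(N*δ) ≤ Lt t / δ := by
          rw [← div_div]; gcongr
        have heq : ε^2/(↑N*δ)*ε^2/2 = ε^4/(2*δ*↑N) := by ring
        rw [← heq]
        have h2 := mul_le_mul_of_nonneg_right hm (sq_nonneg ε)
        linarith
      exact le_trans h1 (le_trans hexp hδsmall)
    have hmeasE : MeasurableSet {ω : Ω |
        (1 - ε) ^ 2 * max (Lhat - ε) 0 ≤ ∑ t : Fin N, ∑ j ∈ T t, ℓ j * Y j ω} := by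
      apply measurableSet_le measurable_const
      exact Finset.measurable_sum _ fun t _ =>
        Finset.measurable_sum _ fun j _ => (hYmeas j).const_mul _
    set E : Set Ω := {ω : Ω |
        (1 - ε) ^ 2 * max (Lhat - ε) 0 ≤ ∑ t : Fin N, ∑ j ∈ T t, ℓ j * Y j ω} with hE
    have hsub : Eᶜ ⊆ ⋃ t ∈ S, B t := by
      intro ω hω
      by_contra hc
      apply hω
      have hgood : ∀ t ∈ S, ¬ (∑ j ∈ T t, (ℓ j / δ) * Y j ω ≤ (1 - ε) * (Lt t / δ)) := by
        intro t ht hmem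
        exact hc (Set.mem_biUnion ht (by simpa [hB] using hmem))
      have key : ∀ t ∈ S, (1 - ε) * Lt t ≤ ∑ j ∈ T t, ℓ j * Y j ω := by
        intro t ht
        have h1 := hgood t ht
        push_neg at h1
        have h2 : ∑ j ∈ T t, (ℓ j / δ) * Y j ω = (∑ j ∈ T t, ℓ j * Y j ω) / δ := by
          rw [Finset.sum_div]; exact Finset.sum_congr rfl fun j _ => by ring
        rw [h2] at h1
        have h3 := mul_lt_mul_of_pos_right h1 hδ
        rw [div_mul_cancel₀ _ hδ.ne', mul_assoc, div_mul_cancel₀ _ hδ.ne'] at h3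
        linarith
      have hcard : S.card ≤ N := le_trans (Finset.card_le_univ S) (by simp)
      have hS_sum : Lhat - ε^2 ≤ ∑ t ∈ S, Lt t := by
        have h4 : ∑ t ∈ Finset.univ \ S, Lt t ≤ ε^2 := by
          have h5 : ∀ t ∈ Finset.univ \ S, Lt t ≤ ε^2/N := by
            intro t ht
            have hns := (Finset.mem_sdiff.mp ht).2
            rw [hS, Finset.mem_filter] at hns
            push_neg at hns
            exact (hns (Finset.mem_univ t)).le
          calc ∑ t ∈ Finset.univ \ S, Lt t
              ≤ (Finset.univ \ S).card • (ε^2/N) := Finset.sum_le_card_nsmul _ _ _ h5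
            _ = ((Finset.univ \ S).card : ℝ) * (ε^2/N) := nsmul_eq_mul _ _
            _ ≤ (N : ℝ) * (ε^2/N) := by
                have : ((Finset.univ \ S).card : ℝ) ≤ (N : ℝ) := by
                  exact_mod_cast le_trans (Finset.card_le_univ _) (by simp)
                exact mul_le_mul_of_nonneg_right this
                  (div_nonneg (sq_nonneg ε) hNR.le)
            _ = ε^2 := by field_simp
        have h6 := Finset.sum_sdiff (f := Lt) (Finset.subset_univ S)
        have h7 := hyload hLε
        have h8 : ∑ t : Fin N, ∑ j ∈ T t, ℓ j * ystar j = ∑ t : Fin N, Lt t := by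
          rw [hLt]
        rw [h8] at h7
        linarith
      have hmax : max (Lhat - ε) 0 = Lhat - ε := max_eq_left (by linarith)
      have htot : (1 - ε) * ∑ t ∈ S, Lt t ≤ ∑ t ∈ S, ∑ j ∈ T t, ℓ j * Y j ω := by
        rw [Finset.mul_sum]; exact Finset.sum_le_sum key
      have htot2 : ∑ t ∈ S, ∑ j ∈ T t, ℓ j * Y j ω ≤ ∑ t : Fin N, ∑ j ∈ T t, ℓ j * Y j ω :=
        Finset.sum_le_sum_of_subset_of_nonneg (Finset.subset_univ S)
          (fun t _ _ => Finset.sum_nonneg fun j _ => mul_nonneg (hℓ j).1 (hYnn j ω))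
      have hA : (1 - ε) * (Lhat - ε^2) ≤ (1 - ε) * ∑ t ∈ S, Lt t :=
        mul_le_mul_of_nonneg_left hS_sum (by linarith)
      have hB2 : (1 - ε)^2 * (Lhat - ε) ≤ (1 - ε) * (Lhat - ε^2) := by
        nlinarith [mul_nonneg (mul_nonneg hε0.le (by linarith : (0:ℝ) ≤ 1 - ε))
          (by linarith : (0:ℝ) ≤ 1 + Lhat - 2*ε)]
      rw [hE, Set.mem_setOf_eq, hmax]
      linarith
    have hEc : μ Eᶜ ≤ ENNReal.ofReal α := by
      calc μ Eᶜ ≤ μ (⋃ t ∈ S, B t) := measure_mono hsub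
        _ ≤ ∑ t ∈ S, μ (B t) := measure_biUnion_finset_le S B
        _ ≤ ∑ _t ∈ S, ENNReal.ofReal (α/N) := by
            refine Finset.sum_le_sum fun t ht => ?_
            rw [← ENNReal.ofReal_toReal (measure_ne_top μ (B t))]
            exact ENNReal.ofReal_le_ofReal (hBbound t ht)
        _ = (S.card : ENNReal) * ENNReal.ofReal (α/N) := by
            rw [Finset.sum_const, nsmul_eq_mul]
        _ ≤ (N : ENNReal) * ENNReal.ofReal (α/N) := by
            gcongr
            exact_mod_cast le_trans (Finset.card_le_univ S) (by simp)
        _ = ENNReal.ofReal α := by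
            rw [← ENNReal.ofReal_natCast, ← ENNReal.ofReal_mul (Nat.cast_nonneg N)]
            congr 1
            field_simp
    have hEcR : (μ Eᶜ).toReal ≤ α := ENNReal.toReal_le_of_le_ofReal hα0.le hEc
    have hadd : (μ E).toReal + (μ Eᶜ).toReal = 1 := by
      rw [← ENNReal.toReal_add (measure_ne_top μ E) (measure_ne_top μ Eᶜ),
        measure_add_measure_compl hmeasE, measure_univ, ENNReal.toReal_one]
    linarith
  · -- trivial case : Lhat < ε
    have hmax : max (Lhat - ε) 0 = 0 := max_eq_right (by linarith)
    have hset : {ω : Ω |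
        (1 - ε) ^ 2 * max (Lhat - ε) 0 ≤ ∑ t : Fin N, ∑ j ∈ T t, ℓ j * Y j ω} = Set.univ := by
      ext ω
      simp only [Set.mem_setOf_eq, Set.mem_univ, iff_true, hmax, mul_zero]
      exact hsum_nonneg ω
    rw [hset, measure_univ, ENNReal.toReal_one]
    linarith
end

section
/- Let j₀ = β(t_min). Then R_{t_min} ≥ b_{j₀} + (1−ε)·d_{j₀} − 2ε·OPT. -/
open MeasureTheory ProbabilityTheory

/-- **first claim of Theorem 3 / free-order prophets analysis.**
In the bucketed free-order prophets setup (buckets `B₁,…,B_m` listed by the permutation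
`σ` in reverse order, base values `b`, guesses `g`, delta-guesses `d`, suffix values
`R_t`, and `t_min` the first time we are ahead of schedule), with `j₀ = β(σ(t_min))`:
`R_{t_min} ≥ b_{j₀} + (1−ε)·d_{j₀} − 2ε·OPT`.  (Indices of positions are 0-based:
position `t : Fin n` corresponds to the paper's time `t+1`, and `R n = 0` is the
paper's `R_{n+1}`.) -/
theorem freeOrderProphets_ahead_of_schedule_bound
    {Ω : Type*} [MeasurableSpace Ω] (μ : Measure Ω) [IsProbabilityMeasure μ]
    (n m : ℕ) (hn : 0 < n) (hm : 1 ≤ m)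
    (ε OPT E : ℝ) (hε : ε ∈ Set.Ioo (0 : ℝ) 1) (hOPT : 0 < OPT)
    (hE1 : (1 - ε) * OPT ≤ E) (hE2 : E ≤ OPT)
    (X : Fin n → Ω → ℝ)
    (hmeas : ∀ i, Measurable (X i))
    (hint : ∀ i, Integrable (X i) μ)
    (hpos : ∀ i ω, 0 ≤ X i ω)
    (hindep : iIndepFun X μ)
    (B : ℕ → Finset (Fin n))
    (hpart : ∀ i : Fin n, ∃! j, j ∈ Finset.Icc 1 m ∧ i ∈ B j)
    (hmbound : (m : ℝ) ≤ 2 / ε + 1)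
    (hB1 : (B 1).Nonempty)
    (b g d : ℕ → ℝ)
    (hb1 : b 1 = 0) (hbtop : b (m + 1) = OPT)
    (hbmono : ∀ j ∈ Finset.Icc 1 m, b j ≤ b (j + 1))
    (hg : ∀ j ∈ Finset.Icc 1 m, max 0 (b j - ε ^ 2 * E) ≤ g j ∧ g j ≤ b j)
    (hd : ∀ j ∈ Finset.Icc 1 m, b (j + 1) - b j - ε ^ 2 * E ≤ d j ∧ d j ≤ b (j + 1) - b j)
    (hbucket : ∀ j ∈ Finset.Icc 1 m, (B j).card ≤ 1 ∨ d j ≤ ε * OPT)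
    (hload : ∀ j ∈ Finset.Icc 1 m,
      (1 - ε) * d j ≤ ∑ i ∈ B j, ∫ ω, max (X i ω - g j) 0 ∂μ)
    (σ : Equiv.Perm (Fin n))
    (β : Fin n → ℕ)
    (hβ : ∀ i : Fin n, β i ∈ Finset.Icc 1 m ∧ i ∈ B (β i))
    (horder : ∀ s t : Fin n, s ≤ t → β (σ t) ≤ β (σ s))
    (R : ℕ → ℝ)
    (hRn : R n = 0)
    (hR : ∀ t : Fin n, R (t : ℕ) = ∫ ω, max (X (σ t) ω) (R ((t : ℕ) + 1)) ∂μ)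
    (tmin : Fin n)
    (htmin1 : g (β (σ tmin)) ≤ R ((tmin : ℕ) + 1))
    (htmin2 : ∀ s : Fin n, s < tmin → R ((s : ℕ) + 1) < g (β (σ s))) :
    b (β (σ tmin)) + (1 - ε) * d (β (σ tmin)) - 2 * ε * OPT ≤ R (tmin : ℕ) := by

  obtain ⟨hj1, hj2⟩ := hβ (σ tmin)
  have hε0 := hε.1
  have hε1 := hε.2
  have hE0 : 0 ≤ E := le_trans (by nlinarith) hE1
  have hεE : ε ^ 2 * E ≤ ε * OPT := by nlinarith
  obtain ⟨hgj1, hgj2⟩ := hg _ hj1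
  have hgb : b (β (σ tmin)) - ε ^ 2 * E ≤ g (β (σ tmin)) :=
    le_trans (le_max_right _ _) hgj1
  have hintmax : ∀ c : ℝ, Integrable (fun ω => max (X (σ tmin) ω) c) μ := fun c =>
    (hint _).sup (integrable_const c)
  have hRmono : R ((tmin : ℕ) + 1) ≤ R (tmin : ℕ) := by
    rw [hR tmin]
    calc R ((tmin : ℕ) + 1) = ∫ _ω, R ((tmin : ℕ) + 1) ∂μ := by simp
    _ ≤ _ := integral_mono (integrable_const _) (hintmax _) (fun ω => le_max_right _ _)
  rcases hbucket _ hj1 with hcard | hstable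
  · -- jump bucket
    have hsingle : B (β (σ tmin)) = {σ tmin} :=
      Finset.eq_singleton_iff_unique_mem.mpr
        ⟨hj2, fun y hy => Finset.card_le_one.mp hcard y hy _ hj2⟩
    have hloadj := hload _ hj1
    rw [hsingle, Finset.sum_singleton] at hloadj
    have hintpos : Integrable (fun ω => max (X (σ tmin) ω - g (β (σ tmin))) 0) μ :=
      ((hint _).sub (integrable_const _)).pos_part
    have heq : (∫ ω, max (X (σ tmin) ω) (g (β (σ tmin))) ∂μ)
        = ∫ ω, (g (β (σ tmin)) + max (X (σ tmin) ω - g (β (σ tmin))) 0) ∂μ := by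
      apply integral_congr_ae
      filter_upwards with ω
      rcases le_total (X (σ tmin) ω) (g (β (σ tmin))) with h | h
      · rw [max_eq_right h, max_eq_right (sub_nonpos.mpr h)]; ring
      · rw [max_eq_left h, max_eq_left (sub_nonneg.mpr h)]; ring
    have hval : g (β (σ tmin)) + ∫ ω, max (X (σ tmin) ω - g (β (σ tmin))) 0 ∂μ
        = ∫ ω, max (X (σ tmin) ω) (g (β (σ tmin))) ∂μ := by
      rw [heq, integral_add (integrable_const _) hintpos, integral_const]
      simp
    have hmono2 : (∫ ω, max (X (σ tmin) ω) (g (β (σ tmin))) ∂μ)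
        ≤ ∫ ω, max (X (σ tmin) ω) (R ((tmin : ℕ) + 1)) ∂μ :=
      integral_mono (hintmax _) (hintmax _) (fun ω => max_le_max le_rfl htmin1)
    rw [hR tmin]
    have h2 : ε * OPT ≤ 2 * ε * OPT := by nlinarith
    calc b (β (σ tmin)) + (1 - ε) * d (β (σ tmin)) - 2 * ε * OPT
        ≤ g (β (σ tmin)) + (1 - ε) * d (β (σ tmin)) := by linarith
      _ ≤ g (β (σ tmin)) + ∫ ω, max (X (σ tmin) ω - g (β (σ tmin))) 0 ∂μ := by
          linarith
      _ = ∫ ω, max (X (σ tmin) ω) (g (β (σ tmin))) ∂μ := hval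
      _ ≤ _ := hmono2
  · -- stable bucket
    have hup : (1 - ε) * d (β (σ tmin)) ≤ ε * OPT := by
      rcases le_or_gt 0 (d (β (σ tmin))) with h | h
      · nlinarith
      · nlinarith
    linarith
end

section
/- Let j₀ = β(t_min). Then ∑_{t < t_min} (R_t − R_{t+1}) ≥ (1−ε)·∑_{j=j₀+1}^{m} (b_{j+1} − b_j) − 3ε·OPT. -/
open MeasureTheory ProbabilityTheory

/-- **second claim of Theorem 3 / free-order prophets analysis.**
In the bucketed free-order prophets setup, with `j₀ = β(σ(t_min))`:
`∑_{t < t_min} (R_t − R_{t+1}) ≥ (1−ε)·∑_{j=j₀+1}^{m} (b_{j+1} − b_j) − 3ε·OPT`.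
(Positions are 0-based: position `t : Fin n` corresponds to the paper's time `t+1`,
and `R n = 0` is the paper's `R_{n+1}`.) -/
theorem freeOrderProphets_behind_schedule_gain_bound
    {Ω : Type*} [MeasurableSpace Ω] (μ : Measure Ω) [IsProbabilityMeasure μ]
    (n m : ℕ) (hn : 0 < n) (hm : 1 ≤ m)
    (ε OPT E : ℝ) (hε : ε ∈ Set.Ioo (0 : ℝ) 1) (hOPT : 0 < OPT)
    (hE1 : (1 - ε) * OPT ≤ E) (hE2 : E ≤ OPT)
    (X : Fin n → Ω → ℝ)
    (hmeas : ∀ i, Measurable (X i))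
    (hint : ∀ i, Integrable (X i) μ)
    (hpos : ∀ i ω, 0 ≤ X i ω)
    (hindep : iIndepFun X μ)
    (B : ℕ → Finset (Fin n))
    (hpart : ∀ i : Fin n, ∃! j, j ∈ Finset.Icc 1 m ∧ i ∈ B j)
    (hmbound : (m : ℝ) ≤ 2 / ε + 1)
    (hB1 : (B 1).Nonempty)
    (b g d : ℕ → ℝ)
    (hb1 : b 1 = 0) (hbtop : b (m + 1) = OPT)
    (hbmono : ∀ j ∈ Finset.Icc 1 m, b j ≤ b (j + 1))
    (hg : ∀ j ∈ Finset.Icc 1 m, max 0 (b j - ε ^ 2 * E) ≤ g j ∧ g j ≤ b j)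
    (hd : ∀ j ∈ Finset.Icc 1 m, b (j + 1) - b j - ε ^ 2 * E ≤ d j ∧ d j ≤ b (j + 1) - b j)
    (hbucket : ∀ j ∈ Finset.Icc 1 m, (B j).card ≤ 1 ∨ d j ≤ ε * OPT)
    (hload : ∀ j ∈ Finset.Icc 1 m,
      (1 - ε) * d j ≤ ∑ i ∈ B j, ∫ ω, max (X i ω - g j) 0 ∂μ)
    (σ : Equiv.Perm (Fin n))
    (β : Fin n → ℕ)
    (hβ : ∀ i : Fin n, β i ∈ Finset.Icc 1 m ∧ i ∈ B (β i))
    (horder : ∀ s t : Fin n, s ≤ t → β (σ t) ≤ β (σ s))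
    (R : ℕ → ℝ)
    (hRn : R n = 0)
    (hR : ∀ t : Fin n, R (t : ℕ) = ∫ ω, max (X (σ t) ω) (R ((t : ℕ) + 1)) ∂μ)
    (tmin : Fin n)
    (htmin1 : g (β (σ tmin)) ≤ R ((tmin : ℕ) + 1))
    (htmin2 : ∀ s : Fin n, s < tmin → R ((s : ℕ) + 1) < g (β (σ s))) :
    (1 - ε) * (∑ j ∈ Finset.Icc (β (σ tmin) + 1) m, (b (j + 1) - b j)) - 3 * ε * OPT
      ≤ ∑ t ∈ Finset.range (tmin : ℕ), (R t - R (t + 1)) := by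
  obtain ⟨hε0, hε1⟩ := hε
  set j₀ := β (σ tmin) with hj₀
  -- h i : gain from index i
  obtain ⟨h, hh⟩ : ∃ h : Fin n → ℝ, h = fun i => ∫ ω, max (X i ω - g (β i)) 0 ∂μ := ⟨_, rfl⟩
  have hE0 : 0 ≤ E := le_trans (by nlinarith) hE1
  have hnonneg : ∀ i, 0 ≤ h i := by
    intro i
    rw [hh]
    exact integral_nonneg fun ω => le_max_right _ _
  have hintmax : ∀ (i : Fin n) (a : ℝ), Integrable (fun ω => max (X i ω - a) 0) μ := by
    intro i a
    have := ((hint i).sub (integrable_const a)).sup (integrable_const (0:ℝ))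
    simpa [Pi.sup_def] using this
  -- Step A: per-position bound
  have stepA : ∀ t : Fin n, t < tmin → h (σ t) ≤ R (t : ℕ) - R ((t : ℕ) + 1) := by
    intro t ht
    set c := R ((t : ℕ) + 1) with hc
    have hcg : c ≤ g (β (σ t)) := (htmin2 t ht).le
    have h1 : R (t : ℕ) - c = ∫ ω, max (X (σ t) ω - c) 0 ∂μ := by
      rw [hR t]
      have heq : ∀ ω, max (X (σ t) ω) c = max (X (σ t) ω - c) 0 + c := by
        intro ω
        rcases le_total (X (σ t) ω) c with hle | hle
        · rw [max_eq_right hle, max_eq_right (by linarith)]; ring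
        · rw [max_eq_left hle, max_eq_left (by linarith)]; ring
      rw [integral_congr_ae (Filter.Eventually.of_forall heq),
        integral_add (hintmax _ _) (integrable_const c), integral_const]
      simp
    rw [sub_eq_iff_eq_add'] at h1
    rw [h1]
    have h2 : h (σ t) ≤ ∫ ω, max (X (σ t) ω - c) 0 ∂μ := by
      simp only [hh]
      apply integral_mono (hintmax _ _) (hintmax _ _)
      intro ω
      exact max_le_max (by linarith) le_rfl
    linarith
  -- reindex ℕ sum over range tmin into Fin n sum
  have hT : ∑ t ∈ Finset.range (tmin : ℕ), (R t - R (t + 1))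
      = ∑ t ∈ Finset.univ.filter (fun t : Fin n => t < tmin), (R (t : ℕ) - R ((t : ℕ) + 1)) := by
    refine Finset.sum_nbij' (fun k => (⟨k % n, Nat.mod_lt _ hn⟩ : Fin n))
      (fun t => (t : ℕ)) ?_ ?_ ?_ ?_ ?_
    · intro k hk
      simp only [Finset.mem_range] at hk
      have hkn : k < n := hk.trans tmin.isLt
      simp only [Finset.mem_filter, Finset.mem_univ, true_and, Fin.lt_def]
      show k % n < (tmin : ℕ)
      rw [Nat.mod_eq_of_lt hkn]; exact hk
    · intro t ht
      simp only [Finset.mem_filter, Finset.mem_univ, true_and, Fin.lt_def] at ht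
      simpa using ht
    · intro k hk
      simp only [Finset.mem_range] at hk
      have hkn : k < n := hk.trans tmin.isLt
      show k % n = k
      exact Nat.mod_eq_of_lt hkn
    · intro t ht
      apply Fin.ext
      show (t : ℕ) % n = (t : ℕ)
      exact Nat.mod_eq_of_lt t.isLt
    · intro k hk
      simp only [Finset.mem_range] at hk
      have hkn : k < n := hk.trans tmin.isLt
      show R k - R (k + 1) = R (k % n) - R (k % n + 1)
      rw [Nat.mod_eq_of_lt hkn]
  -- Step B: sum over positions ≥ sum over high buckets of h
  have hT'subT : (Finset.univ.filter (fun t : Fin n => j₀ < β (σ t)))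
      ⊆ Finset.univ.filter (fun t : Fin n => t < tmin) := by
    intro t ht
    simp only [Finset.mem_filter, Finset.mem_univ, true_and] at ht ⊢
    by_contra hnot
    push_neg at hnot
    exact absurd (horder tmin t hnot) (by omega)
  have stepB : ∑ t ∈ Finset.univ.filter (fun t : Fin n => j₀ < β (σ t)), h (σ t)
      ≤ ∑ t ∈ Finset.range (tmin : ℕ), (R t - R (t + 1)) := by
    rw [hT]
    calc ∑ t ∈ Finset.univ.filter (fun t : Fin n => j₀ < β (σ t)), h (σ t)
        ≤ ∑ t ∈ Finset.univ.filter (fun t : Fin n => t < tmin), h (σ t) :=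
          Finset.sum_le_sum_of_subset_of_nonneg hT'subT (fun t _ _ => hnonneg _)
      _ ≤ _ := Finset.sum_le_sum (fun t ht => stepA t (by simpa using ht))
  -- change variables via σ
  have hreindex : ∑ t ∈ Finset.univ.filter (fun t : Fin n => j₀ < β (σ t)), h (σ t)
      = ∑ i ∈ Finset.univ.filter (fun i : Fin n => j₀ < β i), h i := by
    refine Finset.sum_nbij' (fun t => σ t) (fun i => σ.symm i) ?_ ?_ ?_ ?_ ?_
    · intro t ht
      simp only [Finset.mem_filter, Finset.mem_univ, true_and] at ht ⊢
      exact ht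
    · intro i hi
      simp only [Finset.mem_filter, Finset.mem_univ, true_and] at hi ⊢
      rwa [Equiv.apply_symm_apply]
    · intro t _
      exact σ.symm_apply_apply t
    · intro i _
      exact σ.apply_symm_apply i
    · intro t _
      rfl
  -- fiberwise decomposition
  have hfiber : ∀ j ∈ Finset.Icc (j₀ + 1) m,
      (Finset.univ.filter (fun i : Fin n => j₀ < β i)).filter (fun i => β i = j) = B j := by
    intro j hj
    simp only [Finset.mem_Icc] at hj
    ext i
    simp only [Finset.mem_filter, Finset.mem_univ, true_and]
    constructor
    · rintro ⟨-, rfl⟩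
      exact (hβ i).2
    · intro hiB
      have huniq := hpart i
      obtain ⟨j', hj', huj⟩ := huniq
      have e1 : β i = j' := huj _ ⟨(hβ i).1, (hβ i).2⟩
      have e2 : j = j' := huj _ ⟨Finset.mem_Icc.mpr ⟨by omega, hj.2⟩, hiB⟩
      omega
  have hdecomp : ∑ j ∈ Finset.Icc (j₀ + 1) m, ∑ i ∈ B j, h i
      = ∑ i ∈ Finset.univ.filter (fun i : Fin n => j₀ < β i), h i := by
    rw [← Finset.sum_fiberwise_of_maps_to (g := β)
      (t := Finset.Icc (j₀ + 1) m) ?_ h]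
    · exact Finset.sum_congr rfl fun j hj => by rw [hfiber j hj]
    · intro i hi
      simp only [Finset.mem_filter, Finset.mem_univ, true_and] at hi
      have := (hβ i).1
      simp only [Finset.mem_Icc] at this ⊢
      omega
  -- per-bucket bound
  have hbucketbd : ∀ j ∈ Finset.Icc (j₀ + 1) m, (1 - ε) * d j ≤ ∑ i ∈ B j, h i := by
    intro j hj
    simp only [Finset.mem_Icc] at hj
    have hj1m : j ∈ Finset.Icc 1 m := Finset.mem_Icc.mpr ⟨by omega, hj.2⟩
    refine le_trans (hload j hj1m) (le_of_eq (Finset.sum_congr rfl fun i hi => ?_))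
    have : β i = j := by
      obtain ⟨j', hj', huj⟩ := hpart i
      have e1 : β i = j' := huj _ ⟨(hβ i).1, (hβ i).2⟩
      have e2 : j = j' := huj _ ⟨hj1m, hi⟩
      omega
    simp only [hh]
    rw [this]
  -- assemble
  have hmain : ∑ j ∈ Finset.Icc (j₀ + 1) m, (1 - ε) * d j
      ≤ ∑ t ∈ Finset.range (tmin : ℕ), (R t - R (t + 1)) := by
    calc ∑ j ∈ Finset.Icc (j₀ + 1) m, (1 - ε) * d j
        ≤ ∑ j ∈ Finset.Icc (j₀ + 1) m, ∑ i ∈ B j, h i := Finset.sum_le_sum hbucketbd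
      _ = _ := hdecomp
      _ = _ := hreindex.symm
      _ ≤ _ := stepB
  refine le_trans ?_ hmain
  -- final arithmetic
  have hdj : ∀ j ∈ Finset.Icc (j₀ + 1) m,
      (1 - ε) * (b (j + 1) - b j) - (1 - ε) * (ε ^ 2 * E) ≤ (1 - ε) * d j := by
    intro j hj
    simp only [Finset.mem_Icc] at hj
    have hdd := (hd j (Finset.mem_Icc.mpr ⟨by omega, hj.2⟩)).1
    have h1ε : (0:ℝ) ≤ 1 - ε := by linarith
    calc (1 - ε) * (b (j + 1) - b j) - (1 - ε) * (ε ^ 2 * E)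
        = (1 - ε) * (b (j + 1) - b j - ε ^ 2 * E) := by ring
      _ ≤ (1 - ε) * d j := mul_le_mul_of_nonneg_left hdd h1ε
  have hsum : ∑ j ∈ Finset.Icc (j₀ + 1) m,
      ((1 - ε) * (b (j + 1) - b j) - (1 - ε) * (ε ^ 2 * E))
      ≤ ∑ j ∈ Finset.Icc (j₀ + 1) m, (1 - ε) * d j := Finset.sum_le_sum hdj
  rw [Finset.sum_sub_distrib, ← Finset.mul_sum, Finset.sum_const, nsmul_eq_mul] at hsum
  refine le_trans ?_ hsum
  have hcard : ((Finset.Icc (j₀ + 1) m).card : ℝ) ≤ (m : ℝ) := by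
    have : (Finset.Icc (j₀ + 1) m).card ≤ m := by
      rw [Nat.card_Icc]; omega
    exact_mod_cast this
  have hmε : (m : ℝ) * ε ≤ 2 + ε := by
    have := mul_le_mul_of_nonneg_right hmbound hε0.le
    rwa [add_mul, div_mul_cancel₀ _ (ne_of_gt hε0), one_mul] at this
  have hkey : ((Finset.Icc (j₀ + 1) m).card : ℝ) * ((1 - ε) * (ε ^ 2 * E)) ≤ 3 * ε * OPT := by
    have h1 : ((Finset.Icc (j₀ + 1) m).card : ℝ) * ((1 - ε) * (ε ^ 2 * E))
        ≤ (m : ℝ) * (ε ^ 2 * OPT) := by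
      have hc0 : (0:ℝ) ≤ ((Finset.Icc (j₀ + 1) m).card : ℝ) := Nat.cast_nonneg _
      have h2 : (1 - ε) * (ε ^ 2 * E) ≤ ε ^ 2 * OPT := by
        have ha := mul_le_mul_of_nonneg_left hE2 (sq_nonneg ε)
        have hb := mul_nonneg hε0.le (mul_nonneg (sq_nonneg ε) hE0)
        nlinarith [ha, hb]
      have h3 : (0:ℝ) ≤ (1 - ε) * (ε ^ 2 * E) :=
        mul_nonneg (by linarith) (mul_nonneg (sq_nonneg ε) hE0)
      nlinarith
    have h4 : (m : ℝ) * (ε ^ 2 * OPT) ≤ 3 * ε * OPT := by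
      have h5 := mul_le_mul_of_nonneg_right hmε (mul_nonneg hε0.le hOPT.le)
      have h6 : (0:ℝ) ≤ (1 - ε) * ε * OPT :=
        mul_nonneg (mul_nonneg (by linarith) hε0.le) hOPT.le
      nlinarith [h5, h6]
    linarith
  linarith
end

section
/- R₁ ≥ (1 − 7ε)·OPT; that is, the optimal-stopping value of the permutation σ produced from the bucket assignment is at least (1−7ε) times OPT. -/
open MeasureTheory ProbabilityTheory

set_option maxHeartbeats 2000000

/-- A downward-closed subset of `Fin n` consists exactly of the first `card` positions. -/
lemma fop_dcl {n : ℕ} (T : Finset (Fin n)) (hT : ∀ s t : Fin n, s ≤ t → t ∈ T → s ∈ T)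
    (t : Fin n) : t ∈ T ↔ (t : ℕ) < T.card := by
  constructor
  · intro ht
    have hsub : Finset.Iic t ⊆ T := fun s hs => hT s t (Finset.mem_Iic.mp hs) ht
    have := Finset.card_le_card hsub
    rw [Fin.card_Iic] at this
    omega
  · intro hlt
    by_contra hnot
    have hsub : T ⊆ Finset.Iio t := by
      intro s hs
      rw [Finset.mem_Iio]
      by_contra hst
      exact hnot (hT t s (not_lt.mp hst) hs)
    have := Finset.card_le_card hsub
    rw [Fin.card_Iio] at this
    omega

/-- **Theorem 3, free-order prophets.**  In the bucketed free-order
prophets setup (buckets `B₁,…,B_m` listed by the permutation `σ` in reverse order,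
base values `b`, guesses `g`, delta-guesses `d`, suffix values `R_t`), the
optimal-stopping value of the permutation `σ` produced from the bucket assignment
satisfies `R₁ ≥ (1 − 7ε)·OPT`.  (Positions are 0-based: `R 0` is the paper's `R₁` and
`R n = 0` is the paper's `R_{n+1}`.) -/
theorem freeOrderProphets_value_guarantee
    {Ω : Type*} [MeasurableSpace Ω] (μ : Measure Ω) [IsProbabilityMeasure μ]
    (n m : ℕ) (hn : 0 < n) (hm : 1 ≤ m)
    (ε OPT E : ℝ) (hε : ε ∈ Set.Ioo (0 : ℝ) 1) (hOPT : 0 < OPT)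
    (hE1 : (1 - ε) * OPT ≤ E) (hE2 : E ≤ OPT)
    (X : Fin n → Ω → ℝ)
    (hmeas : ∀ i, Measurable (X i))
    (hint : ∀ i, Integrable (X i) μ)
    (hpos : ∀ i ω, 0 ≤ X i ω)
    (hindep : iIndepFun X μ)
    (B : ℕ → Finset (Fin n))
    (hpart : ∀ i : Fin n, ∃! j, j ∈ Finset.Icc 1 m ∧ i ∈ B j)
    (hmbound : (m : ℝ) ≤ 2 / ε + 1)
    (hB1 : (B 1).Nonempty)
    (b g d : ℕ → ℝ)
    (hb1 : b 1 = 0) (hbtop : b (m + 1) = OPT)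
    (hbmono : ∀ j ∈ Finset.Icc 1 m, b j ≤ b (j + 1))
    (hg : ∀ j ∈ Finset.Icc 1 m, max 0 (b j - ε ^ 2 * E) ≤ g j ∧ g j ≤ b j)
    (hd : ∀ j ∈ Finset.Icc 1 m, b (j + 1) - b j - ε ^ 2 * E ≤ d j ∧ d j ≤ b (j + 1) - b j)
    (hbucket : ∀ j ∈ Finset.Icc 1 m, (B j).card ≤ 1 ∨ d j ≤ ε * OPT)
    (hload : ∀ j ∈ Finset.Icc 1 m,
      (1 - ε) * d j ≤ ∑ i ∈ B j, ∫ ω, max (X i ω - g j) 0 ∂μ)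
    (σ : Equiv.Perm (Fin n))
    (β : Fin n → ℕ)
    (hβ : ∀ i : Fin n, β i ∈ Finset.Icc 1 m ∧ i ∈ B (β i))
    (horder : ∀ s t : Fin n, s ≤ t → β (σ t) ≤ β (σ s))
    (R : ℕ → ℝ)
    (hRn : R n = 0)
    (hR : ∀ t : Fin n, R (t : ℕ) = ∫ ω, max (X (σ t) ω) (R ((t : ℕ) + 1)) ∂μ)
    : (1 - 7 * ε) * OPT ≤ R 0 := by
  obtain ⟨hε0, hε1⟩ := hε
  have hE0 : 0 < E := lt_of_lt_of_le (by nlinarith) hE1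
  have hε2E : (0:ℝ) ≤ ε ^ 2 * E := by positivity
  have hεOPT : (0:ℝ) ≤ ε * OPT := by positivity
  -- nonnegativity of b
  have hbnn : ∀ j, j ≤ m → 0 ≤ b (j + 1) := by
    intro j
    induction j with
    | zero => intro _; show (0:ℝ) ≤ b 1; rw [hb1]
    | succ k ih =>
      intro h
      have h1 := ih (by omega)
      have h2 := hbmono (k + 1) (Finset.mem_Icc.mpr ⟨by omega, h⟩)
      linarith
  -- nonnegativity of R
  have hR0 : ∀ t, t ≤ n → 0 ≤ R t := by
    intro t ht
    rcases eq_or_lt_of_le ht with h | h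
    · rw [h, hRn]
    · have h1 : R t = ∫ ω, max (X (σ ⟨t, h⟩) ω) (R (t + 1)) ∂μ := hR ⟨t, h⟩
      rw [h1]
      exact integral_nonneg fun ω => le_max_of_le_left (hpos _ ω)
  -- integrability of positive parts
  have hintg : ∀ (i : Fin n) (c : ℝ), Integrable (fun ω => max (X i ω - c) 0) μ :=
    fun i c => ((hint i).sub (integrable_const c)).sup (integrable_const 0)
  have hintge0 : ∀ (i : Fin n) (c : ℝ), 0 ≤ ∫ ω, max (X i ω - c) 0 ∂μ :=
    fun i c => integral_nonneg fun ω => le_max_right _ _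
  -- one-step inequality
  have hstep : ∀ (t : ℕ) (ht : t < n) (c : ℝ), 0 ≤ c →
      (∫ ω, max (X (σ ⟨t, ht⟩) ω - c) 0 ∂μ) + min c (R (t + 1)) ≤ R t := by
    intro t ht c hc
    have hr : 0 ≤ R (t + 1) := hR0 (t + 1) ht
    have key : ∀ ω, max (X (σ ⟨t, ht⟩) ω - c) 0 + min c (R (t + 1))
        ≤ max (X (σ ⟨t, ht⟩) ω) (R (t + 1)) := by
      intro ω
      have hx := hpos (σ ⟨t, ht⟩) ω
      rcases le_total (X (σ ⟨t, ht⟩) ω) c with h | h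
      · have h1 : max (X (σ ⟨t, ht⟩) ω - c) 0 = 0 := max_eq_right (by linarith)
        rw [h1]
        have h2 := min_le_right c (R (t + 1))
        have h3 := le_max_right (X (σ ⟨t, ht⟩) ω) (R (t + 1))
        linarith
      · have h1 : max (X (σ ⟨t, ht⟩) ω - c) 0 = X (σ ⟨t, ht⟩) ω - c := max_eq_left (by linarith)
        rw [h1]
        have h2 := min_le_left c (R (t + 1))
        have h3 := le_max_left (X (σ ⟨t, ht⟩) ω) (R (t + 1))
        linarith
    have h2 : R t = ∫ ω, max (X (σ ⟨t, ht⟩) ω) (R (t + 1)) ∂μ := hR ⟨t, ht⟩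
    have h3 : (∫ ω, max (X (σ ⟨t, ht⟩) ω - c) 0 ∂μ) + min c (R (t + 1))
        = ∫ ω, (max (X (σ ⟨t, ht⟩) ω - c) 0 + min c (R (t + 1))) ∂μ := by
      rw [integral_add (hintg _ c) (integrable_const _), integral_const]
      simp
    rw [h2, h3]
    exact integral_mono ((hintg _ c).add (integrable_const _))
      ((hint _).sup (integrable_const _)) key
  -- chained inequality over a segment
  have hchain : ∀ (c : ℝ), 0 ≤ c → ∀ k t, t + k ≤ n →
      min c (R (t + k) + ∑ s ∈ Finset.univ.filter
          (fun s : Fin n => t ≤ (s : ℕ) ∧ (s : ℕ) < t + k),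
        ∫ ω, max (X (σ s) ω - c) 0 ∂μ) ≤ R t := by
    intro c hc k
    induction k with
    | zero =>
      intro t ht
      have hemp : (Finset.univ.filter fun s : Fin n => t ≤ (s : ℕ) ∧ (s : ℕ) < t + 0) = ∅ := by
        ext s
        simp only [Finset.mem_filter, Finset.mem_univ, true_and, Finset.notMem_empty, iff_false]
        omega
      rw [hemp, Finset.sum_empty, add_zero, Nat.add_zero]
      exact min_le_right _ _
    | succ k ih =>
      intro t ht
      have htn : t < n := by omega
      have hfil : (Finset.univ.filter fun s : Fin n => t ≤ (s : ℕ) ∧ (s : ℕ) < t + (k + 1))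
          = insert (⟨t, htn⟩ : Fin n)
            (Finset.univ.filter fun s : Fin n => t + 1 ≤ (s : ℕ) ∧ (s : ℕ) < t + 1 + k) := by
        ext s
        simp [Fin.ext_iff]
        omega
      have hnot : (⟨t, htn⟩ : Fin n) ∉
          Finset.univ.filter fun s : Fin n => t + 1 ≤ (s : ℕ) ∧ (s : ℕ) < t + 1 + k := by
        simp
      have ht1 : t + (k + 1) = t + 1 + k := by omega
      rw [hfil, Finset.sum_insert hnot, ht1]
      have hih := ih (t + 1) (by omega)
      set e := ∫ ω, max (X (σ ⟨t, htn⟩) ω - c) 0 ∂μ with he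
      set S := ∑ s ∈ Finset.univ.filter
          (fun s : Fin n => t + 1 ≤ (s : ℕ) ∧ (s : ℕ) < t + 1 + k),
        ∫ ω, max (X (σ s) ω - c) 0 ∂μ with hS
      have he0 : 0 ≤ e := hintge0 _ _
      have h4 : min c (R (t + 1 + k) + S) ≤ min c (R (t + 1)) := le_min (min_le_left _ _) hih
      have hst := hstep t htn c hc
      have h5 : min c (R (t + 1 + k) + (e + S)) ≤ min c (R (t + 1 + k) + S) + e := by
        rcases le_total c (R (t + 1 + k) + S) with h | h
        · rw [min_eq_left h]
          calc min c (R (t + 1 + k) + (e + S)) ≤ c := min_le_left _ _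
            _ ≤ c + e := by linarith
        · rw [min_eq_right h]
          calc min c (R (t + 1 + k) + (e + S)) ≤ R (t + 1 + k) + (e + S) := min_le_right _ _
            _ = R (t + 1 + k) + S + e := by ring
      linarith
  -- position counts
  set Nf : ℕ → ℕ := fun j => (Finset.univ.filter fun i : Fin n => j < β i).card with hNfdef
  have hNfn : ∀ j, Nf j ≤ n := by
    intro j
    simp only [hNfdef]
    calc (Finset.univ.filter fun i : Fin n => j < β i).card
        ≤ (Finset.univ : Finset (Fin n)).card := Finset.card_filter_le _ _
      _ = n := by simp
  have hNfm : Nf m = 0 := by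
    simp only [hNfdef]
    rw [Finset.card_eq_zero, Finset.filter_eq_empty_iff]
    intro i _
    have := (hβ i).1
    simp only [Finset.mem_Icc] at this
    omega
  have hNf0 : Nf 0 = n := by
    simp only [hNfdef]
    have : (Finset.univ.filter fun i : Fin n => 0 < β i) = Finset.univ := by
      rw [Finset.filter_eq_self]
      intro i _
      have := (hβ i).1
      simp only [Finset.mem_Icc] at this
      omega
    rw [this]
    simp
  have hBeq : ∀ j, 1 ≤ j → j ≤ m → (Finset.univ.filter fun i : Fin n => β i = j) = B j := by
    intro j h1 h2
    ext i
    simp only [Finset.mem_filter, Finset.mem_univ, true_and]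
    constructor
    · intro h; rw [← h]; exact (hβ i).2
    · intro h
      obtain ⟨j', hj', huniq⟩ := hpart i
      have e1 := huniq j ⟨Finset.mem_Icc.mpr ⟨h1, h2⟩, h⟩
      have e2 := huniq (β i) ⟨(hβ i).1, (hβ i).2⟩
      omega
  have hNfstep : ∀ j, j + 1 ≤ m → Nf j = Nf (j + 1) + (B (j + 1)).card := by
    intro j hj
    have hdis : Disjoint (Finset.univ.filter fun i : Fin n => j + 1 < β i)
        (Finset.univ.filter fun i : Fin n => β i = j + 1) := by
      rw [Finset.disjoint_left]
      intro i hi1 hi2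
      simp only [Finset.mem_filter, Finset.mem_univ, true_and] at hi1 hi2
      omega
    have hun : (Finset.univ.filter fun i : Fin n => j < β i)
        = (Finset.univ.filter fun i : Fin n => j + 1 < β i)
          ∪ (Finset.univ.filter fun i : Fin n => β i = j + 1) := by
      ext i
      simp only [Finset.mem_filter, Finset.mem_univ, true_and, Finset.mem_union]
      omega
    simp only [hNfdef]
    rw [hun, Finset.card_union_of_disjoint hdis, hBeq (j + 1) (by omega) hj]
  have hposiff : ∀ j (t : Fin n), (t : ℕ) < Nf j ↔ j < β (σ t) := by
    intro j t
    have hcard : (Finset.univ.filter fun s : Fin n => j < β (σ s)).card = Nf j := by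
      have himg : (Finset.univ.filter fun s : Fin n => j < β (σ s)).image σ
          = Finset.univ.filter fun i : Fin n => j < β i := by
        ext i
        simp only [Finset.mem_image, Finset.mem_filter, Finset.mem_univ, true_and]
        constructor
        · rintro ⟨s, hs, rfl⟩; exact hs
        · intro h; exact ⟨σ.symm i, by simpa using h, by simp⟩
      simp only [hNfdef]
      rw [← himg, Finset.card_image_of_injective _ σ.injective]
    have hdc := fop_dcl (Finset.univ.filter fun s : Fin n => j < β (σ s))
      (fun s u hsu hu => by
        simp only [Finset.mem_filter, Finset.mem_univ, true_and] at hu ⊢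
        exact lt_of_lt_of_le hu (horder s u hsu)) t
    simp only [Finset.mem_filter, Finset.mem_univ, true_and] at hdc
    rw [hcard] at hdc
    exact hdc.symm
  -- segment sums equal bucket sums
  have hsegsum : ∀ j, j + 1 ≤ m → ∀ c : ℝ,
      (∑ s ∈ Finset.univ.filter
          (fun s : Fin n => Nf (j + 1) ≤ (s : ℕ) ∧ (s : ℕ) < Nf j),
        ∫ ω, max (X (σ s) ω - c) 0 ∂μ)
      = ∑ i ∈ B (j + 1), ∫ ω, max (X i ω - c) 0 ∂μ := by
    intro j hj c
    have hfil : (Finset.univ.filter fun s : Fin n => Nf (j + 1) ≤ (s : ℕ) ∧ (s : ℕ) < Nf j)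
        = Finset.univ.filter fun s : Fin n => β (σ s) = j + 1 := by
      ext s
      simp only [Finset.mem_filter, Finset.mem_univ, true_and]
      have h1 := hposiff (j + 1) s
      have h2 := hposiff j s
      omega
    rw [hfil, ← hBeq (j + 1) (by omega) hj]
    exact Finset.sum_equiv σ (fun s => by simp) (fun s _ => rfl)
  -- error accumulator
  set C : ℕ → ℝ := fun j => if j = 0 then 0 else ε * OPT + ((j : ℝ) + 1) * (ε ^ 2 * E)
    with hCdef
  have hC0 : C 0 = 0 := by simp [hCdef]
  have hCs : ∀ j, j ≠ 0 → C j = ε * OPT + ((j : ℝ) + 1) * (ε ^ 2 * E) := by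
    intro j hj; simp [hCdef, hj]
  have hCstep : ∀ j, C j + ε ^ 2 * E ≤ C (j + 1) := by
    intro j
    by_cases h : j = 0
    · subst h
      rw [hC0, hCs 1 (by omega)]
      push_cast
      nlinarith
    · rw [hCs j h, hCs (j + 1) (by omega)]
      push_cast
      nlinarith
  have hCnn1 : ∀ j : ℕ, ε * OPT + 2 * (ε ^ 2 * E) ≤ C (j + 1) := by
    intro j
    rw [hCs (j + 1) (by omega)]
    push_cast
    nlinarith [Nat.cast_nonneg (α := ℝ) j]
  -- main induction over buckets
  have hmain : ∀ j, j ≤ m → (1 - ε) * b (j + 1) - C j ≤ R (Nf j) := by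
    intro j
    induction j with
    | zero =>
      intro _
      rw [hNf0, hRn, hC0]
      show (1 - ε) * b 1 - 0 ≤ 0
      rw [hb1]
      norm_num
    | succ j ih =>
      intro hj1
      have ihj := ih (by omega)
      have hjm : j + 1 ∈ Finset.Icc 1 m := Finset.mem_Icc.mpr ⟨by omega, hj1⟩
      obtain ⟨hg1, hg2⟩ := hg (j + 1) hjm
      obtain ⟨hd1, hd2⟩ := hd (j + 1) hjm
      have hgl : b (j + 1) - ε ^ 2 * E ≤ g (j + 1) := le_trans (le_max_right _ _) hg1
      have hg0' : 0 ≤ g (j + 1) := le_trans (le_max_left _ _) hg1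
      have hb0 : 0 ≤ b (j + 1) := hbnn j (by omega)
      have hb0' : 0 ≤ b (j + 1 + 1) := hbnn (j + 1) hj1
      have hNs := hNfstep j hj1
      have hload' := hload (j + 1) hjm
      have hRNfj0 : 0 ≤ R (Nf j) := hR0 _ (hNfn j)
      have hCst := hCstep j
      have hCn1 := hCnn1 j
      rcases hbucket (j + 1) hjm with hcard | hstab
      · -- jump bucket: at most one element
        rcases Nat.le_one_iff_eq_zero_or_eq_one.mp hcard with h0 | h1
        · -- empty bucket
          have hBempty : B (j + 1) = ∅ := Finset.card_eq_zero.mp h0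
          have hd0 : d (j + 1) ≤ 0 := by
            rw [hBempty] at hload'
            simp only [Finset.sum_empty] at hload'
            by_contra h
            push_neg at h
            nlinarith
          have hNf_eq : Nf (j + 1) = Nf j := by omega
          rw [hNf_eq]
          have k1 : b (j + 1 + 1) ≤ b (j + 1) + ε ^ 2 * E := by linarith
          have k2 : (1 - ε) * b (j + 1 + 1) ≤ (1 - ε) * b (j + 1) + (1 - ε) * (ε ^ 2 * E) := by
            nlinarith
          have k3 : (1 - ε) * (ε ^ 2 * E) ≤ ε ^ 2 * E := by nlinarith
          linarith
        · -- singleton bucket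
          have hNf_eq : Nf j = Nf (j + 1) + 1 := by omega
          have htn : Nf (j + 1) < n := by have := hNfn j; omega
          have hsum := hsegsum j hj1 (g (j + 1))
          have hfil1 : (Finset.univ.filter
              fun s : Fin n => Nf (j + 1) ≤ (s : ℕ) ∧ (s : ℕ) < Nf j)
              = {(⟨Nf (j + 1), htn⟩ : Fin n)} := by
            ext s
            simp [Fin.ext_iff]
            omega
          rw [hfil1, Finset.sum_singleton] at hsum
          have hstp := hstep (Nf (j + 1)) htn (g (j + 1)) hg0'
          rw [hsum, ← hNf_eq] at hstp
          have hk := mul_le_mul_of_nonneg_left hd1 (show (0:ℝ) ≤ 1 - ε by linarith)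
          rcases le_total (g (j + 1)) (R (Nf j)) with hmn | hmn
          · rw [min_eq_left hmn] at hstp
            nlinarith [mul_nonneg hε0.le hb0]
          · rw [min_eq_right hmn] at hstp
            nlinarith [mul_nonneg hε0.le hε2E]
      · -- stable bucket
        have hn2 : Nf (j + 1) ≤ Nf j := by omega
        have hineq := hchain (g (j + 1)) hg0' (Nf j - Nf (j + 1)) (Nf (j + 1))
          (by have := hNfn j; omega)
        have hk' : Nf (j + 1) + (Nf j - Nf (j + 1)) = Nf j := by omega
        rw [hk'] at hineq
        rw [hsegsum j hj1 (g (j + 1))] at hineq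
        have hk := mul_le_mul_of_nonneg_left hd1 (show (0:ℝ) ≤ 1 - ε by linarith)
        rcases min_cases (g (j + 1))
            (R (Nf j) + ∑ i ∈ B (j + 1), ∫ ω, max (X i ω - g (j + 1)) 0 ∂μ) with
          ⟨hmeq, _⟩ | ⟨hmeq, _⟩ <;> rw [hmeq] at hineq
        · nlinarith [mul_nonneg hε0.le hb0']
        · nlinarith [mul_nonneg hε0.le hε2E]
  -- conclude
  have hfin := hmain m (le_refl m)
  rw [hNfm, hbtop, hCs m (by omega)] at hfin
  have hmε : (m : ℝ) * ε ≤ 2 + ε := by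
    have h2 : (2 / ε + 1) * ε = 2 + ε := by field_simp
    nlinarith [mul_le_mul_of_nonneg_right hmbound hε0.le]
  have p1 : ε * E ≤ ε * OPT := by nlinarith
  have p2 : (m : ℝ) * ε * (ε * E) ≤ (2 + ε) * (ε * OPT) :=
    mul_le_mul hmε p1 (by positivity) (by linarith)
  nlinarith [hfin, p2, mul_nonneg hε0.le hεOPT,
    mul_nonneg (mul_nonneg hε0.le hOPT.le) (show (0:ℝ) ≤ 1 - ε by linarith),
    mul_le_mul_of_nonneg_left hE2 (mul_nonneg hε0.le hε0.le)]
end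

section
/- For all indices 1 ≤ a ≤ e ≤ n and every real g with 0 ≤ g ≤ V*_{e+1}, one has ∑_{t=a}^{e} E[(X_{σ*(t)} − g)⁺] ≥ V*_a − V*_{e+1}. Consequently, the bucketing of the optimal permutation satisfies the load constraints of the induced Santa Claus instance: each contiguous block of variables contributes at least the decrease of the optimal suffix values across that block when measured against any guess g below the block's base value. -/
open MeasureTheory ProbabilityTheory

/-- Let `V*` be the optimal suffix values of the permutation `σ*`
(`V*_{n+1} = 0` and `V*_t = E[max{X_{σ*(t)}, V*_{t+1}}]`, here 0-based: `V n = 0` and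
`V t = E[max{X_{σ*(t)}, V (t+1)}]` for `t : Fin n`).  Then for all positions
`a ≤ e` and every real `g` with `0 ≤ g ≤ V_{e+1}`:
`∑_{t=a}^{e} E[(X_{σ*(t)} − g)⁺] ≥ V_a − V_{e+1}`.  Consequently, each contiguous block
of the optimal permutation contributes at least the decrease of the optimal suffix
values across that block when measured against any guess `g` below the block's base
value. -/
theorem freeOrderProphets_block_load_guarantee
    {Ω : Type*} [MeasurableSpace Ω] (μ : Measure Ω) [IsProbabilityMeasure μ]
    (n : ℕ) (X : Fin n → Ω → ℝ)
    (hmeas : ∀ i, Measurable (X i))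
    (hint : ∀ i, Integrable (X i) μ)
    (hpos : ∀ i ω, 0 ≤ X i ω)
    (hindep : iIndepFun X μ)
    (σstar : Equiv.Perm (Fin n))
    (V : ℕ → ℝ)
    (hVn : V n = 0)
    (hV : ∀ t : Fin n, V (t : ℕ) = ∫ ω, max (X (σstar t) ω) (V ((t : ℕ) + 1)) ∂μ) :
    ∀ a e : Fin n, a ≤ e → ∀ g : ℝ, 0 ≤ g → g ≤ V ((e : ℕ) + 1) →
      V (a : ℕ) - V ((e : ℕ) + 1)
        ≤ ∑ t ∈ Finset.Icc a e, ∫ ω, max (X (σstar t) ω - g) 0 ∂μ := by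
  intro a e hae g hg0 hge
  -- integrability of max (X t - c) 0 for any constant c
  have hintpos : ∀ (t : Fin n) (c : ℝ),
      Integrable (fun ω => max (X (σstar t) ω - c) 0) μ := by
    intro t c
    exact ((hint _).sub (integrable_const c)).pos_part
  have hintmax : ∀ (t : Fin n) (c : ℝ),
      Integrable (fun ω => max (X (σstar t) ω) c) μ := by
    intro t c
    have h := (hintpos t c).add (integrable_const c)
    have heq : (fun ω => max (X (σstar t) ω - c) 0 + c)
        = fun ω => max (X (σstar t) ω) c := by
      funext ω
      rw [← max_add_add_right, sub_add_cancel, zero_add]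
    exact h.congr (Filter.Eventually.of_forall fun ω => congrFun heq ω)
  -- monotonicity: V (t+1) ≤ V t
  have hmono : ∀ t : Fin n, V ((t : ℕ) + 1) ≤ V (t : ℕ) := by
    intro t
    rw [hV t]
    calc V ((t : ℕ) + 1) = ∫ _ω, V ((t : ℕ) + 1) ∂μ := by
          simp [integral_const]
      _ ≤ ∫ ω, max (X (σstar t) ω) (V ((t : ℕ) + 1)) ∂μ :=
          integral_mono (integrable_const _) (hintmax t _)
            (fun ω => le_max_right _ _)
  -- single step
  have hstep : ∀ t : Fin n, g ≤ V ((t : ℕ) + 1) →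
      V (t : ℕ) - V ((t : ℕ) + 1) ≤ ∫ ω, max (X (σstar t) ω - g) 0 ∂μ := by
    intro t hgt
    set c := V ((t : ℕ) + 1) with hc
    have h1 : V (t : ℕ) - c = ∫ ω, max (X (σstar t) ω - c) 0 ∂μ := by
      rw [hV t, ← hc]
      have : (∫ ω, max (X (σstar t) ω) c ∂μ) - c
          = ∫ ω, (max (X (σstar t) ω) c - c) ∂μ := by
        rw [integral_sub (hintmax t c) (integrable_const c)]
        simp [integral_const]
      rw [this]
      congr 1
      funext ω
      rw [← max_sub_sub_right, sub_self]
    rw [h1]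
    refine integral_mono (hintpos t c) (hintpos t g) (fun ω => ?_)
    exact max_le_max (by linarith) le_rfl
  -- nat-indexed summand
  set f' : ℕ → ℝ := fun k =>
    if h : k < n then ∫ ω, max (X (σstar ⟨k, h⟩) ω - g) 0 ∂μ else 0 with hf'
  -- main induction
  have main : ∀ e' : ℕ, (a : ℕ) ≤ e' → e' < n → g ≤ V (e' + 1) →
      V (a : ℕ) - V (e' + 1) ≤ ∑ k ∈ Finset.Icc (a : ℕ) e', f' k := by
    intro e' hae'
    induction e', hae' using Nat.le_induction with
    | base =>
        intro hen hgV
        rw [Finset.Icc_self, Finset.sum_singleton, hf']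
        simp only [hen, dif_pos]
        have := hstep ⟨(a : ℕ), hen⟩ hgV
        simpa using this
    | succ m hm ih =>
        intro hmn hgV
        have hm1 : m < n := Nat.lt_of_succ_lt hmn
        have hstep' := hstep ⟨m + 1, hmn⟩ hgV
        have hmono' : V (m + 1 + 1) ≤ V (m + 1) := by
          simpa using hmono ⟨m + 1, hmn⟩
        have hgV' : g ≤ V (m + 1) := le_trans hgV hmono'
        have ihm := ih hm1 hgV'
        rw [Finset.sum_Icc_succ_top (le_trans hm (Nat.le_succ m))]
        have hfm1 : f' (m + 1) = ∫ ω, max (X (σstar ⟨m + 1, hmn⟩) ω - g) 0 ∂μ := by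
          rw [hf']; simp [hmn]
        rw [hfm1]
        simp only [Fin.val_mk] at hstep'
        linarith
  have hae' : (a : ℕ) ≤ (e : ℕ) := hae
  have hmain := main (e : ℕ) hae' e.isLt hge
  -- convert the sum
  have hsum : ∑ k ∈ Finset.Icc (a : ℕ) (e : ℕ), f' k
      = ∑ t ∈ Finset.Icc a e, ∫ ω, max (X (σstar t) ω - g) 0 ∂μ := by
    rw [← Fin.map_valEmbedding_Icc, Finset.sum_map]
    refine Finset.sum_congr rfl (fun t _ => ?_)
    rw [hf']
    simp [t.isLt]
  rw [hsum] at hmain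
  exact hmain
end

section
/- Let X be an integrable real random variable, κ ∈ ℝ, and c = E[(X − κ)⁺]. Then for every real t ≤ κ: E[max{X, t}] − c = E[max{min{X, κ}, t}]. -/
open MeasureTheory

/-- Let `X` be an integrable real random variable, `κ ∈ ℝ`, and
`c = E[(X − κ)⁺]`.  Then for every real `t ≤ κ`:
`E[max{X, t}] − c = E[max{min{X, κ}, t}]`. -/
theorem weitzman_cap_identity {Ω : Type*} [MeasurableSpace Ω]
    (μ : Measure Ω) [IsProbabilityMeasure μ]
    (X : Ω → ℝ) (hX : Integrable X μ) (κ c t : ℝ)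
    (hc : c = ∫ ω, max (X ω - κ) 0 ∂μ) (ht : t ≤ κ) :
    (∫ ω, max (X ω) t ∂μ) - c = ∫ ω, max (min (X ω) κ) t ∂μ := by
  have h1 : Integrable (fun ω => max (X ω) t) μ := hX.sup (integrable_const t)
  have h2 : Integrable (fun ω => max (X ω - κ) 0) μ :=
    (hX.sub (integrable_const κ)).sup (integrable_const 0)
  rw [hc, ← integral_sub h1 h2]
  refine integral_congr_ae (Filter.Eventually.of_forall fun ω => ?_)
  rcases le_total (X ω) t with h | h
  · simp [max_eq_right h, max_eq_right (h.trans ht), min_eq_left (h.trans ht),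
      sub_nonpos.mpr (h.trans ht)]
  · rcases le_total (X ω) κ with h' | h'
    · simp [max_eq_left h, max_eq_right (sub_nonpos.mpr h'), min_eq_left h', max_eq_left h]
    · simp [max_eq_left (ht.trans h'), max_eq_left (h.trans (le_max_left _ _)),
        max_eq_left (sub_nonneg.mpr h'), min_eq_right h', ht]
end

section
/- Let X₁,…,Xₙ be independent integrable real random variables, κ₁,…,κₙ ∈ ℝ, c_i = E[(X_i − κ_i)⁺], and thresholds t₁,…,tₙ with t_i ≤ κ_i for all i. Set Y_i = min{X_i, κ_i} and let τ = min{i ∈ {1,…,n} : X_i ≥ t_i}, with τ = n+1 if no such i exists (note X_i ≥ t_i iff Y_i ≥ t_i since t_i ≤ κ_i). Then E[X_τ·𝟙_{τ≤n}] − ∑_{i=1}^n c_i·P(τ ≥ i) = E[Y_τ·𝟙_{τ≤n}]. In words: the expected utility of the threshold policy in Pandora's Box with Commitment (value collected minus total probing costs paid) equals the expected value of the same threshold stopping rule applied to the capped variables Y_i in the Free-Order Prophets problem. -/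
open MeasureTheory ProbabilityTheory

/-- The stopping time of the threshold policy: the first (0-based) index `i < n` with
`X_i ≥ t_i`, and `n` if no such index exists. -/
noncomputable def stopTime {Ω : Type*} {n : ℕ} (X : Fin n → Ω → ℝ)
    (t : Fin n → ℝ) (ω : Ω) : ℕ :=
  sInf {k : ℕ | k = n ∨ ∃ h : k < n, t ⟨k, h⟩ ≤ X ⟨k, h⟩ ω}

section aux
variable {Ω : Type*} {n : ℕ} (X : Fin n → Ω → ℝ) (t : Fin n → ℝ)

lemma stopTime_le (ω : Ω) : stopTime X t ω ≤ n :=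
  Nat.sInf_le (Or.inl rfl)

lemma le_stopTime_iff {m : ℕ} (hm : m ≤ n) (ω : Ω) :
    m ≤ stopTime X t ω ↔ ∀ j : Fin n, (j : ℕ) < m → X j ω < t j := by
  constructor
  · intro h j hj
    have hnot : (j : ℕ) ∉ {k : ℕ | k = n ∨ ∃ h : k < n, t ⟨k, h⟩ ≤ X ⟨k, h⟩ ω} :=
      Nat.notMem_of_lt_sInf (lt_of_lt_of_le hj h)
    simp only [Set.mem_setOf_eq, not_or, not_exists, not_le] at hnot
    exact hnot.2 j.isLt
  · intro h
    refine le_csInf ⟨n, Or.inl rfl⟩ ?_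
    rintro b (rfl | ⟨hb, hXb⟩)
    · exact hm
    · by_contra hlt
      exact absurd hXb (not_le.2 (h ⟨b, hb⟩ (not_le.1 hlt)))

end aux

/-- Let `X₁,…,Xₙ` be independent integrable random variables,
`κᵢ ∈ ℝ`, `cᵢ = E[(Xᵢ − κᵢ)⁺]`, and thresholds `tᵢ ≤ κᵢ`.  Let `Yᵢ = min{Xᵢ, κᵢ}` and
let `τ` be the first index with `Xᵢ ≥ tᵢ` (equal to `n` if none, in 0-based indexing).
Then `E[X_τ·𝟙_{τ<n}] − ∑ᵢ cᵢ·P(τ ≥ i) = E[Y_τ·𝟙_{τ<n}]`: the expected utility of the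
threshold policy in Pandora's Box with Commitment equals the expected value of the same
threshold stopping rule on the capped variables in the Free-Order Prophets problem. -/
theorem pandora_commitment_eq_capped_prophets {Ω : Type*} [MeasurableSpace Ω]
    (μ : Measure Ω) [IsProbabilityMeasure μ]
    (n : ℕ) (X : Fin n → Ω → ℝ)
    (hmeas : ∀ i, Measurable (X i)) (hint : ∀ i, Integrable (X i) μ)
    (hindep : iIndepFun X μ)
    (κ c t : Fin n → ℝ)
    (hc : ∀ i, c i = ∫ ω, max (X i ω - κ i) 0 ∂μ)
    (ht : ∀ i, t i ≤ κ i) :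
    (∫ ω, (if h : stopTime X t ω < n then X ⟨stopTime X t ω, h⟩ ω else 0) ∂μ)
      - ∑ i : Fin n, c i * (μ {ω | (i : ℕ) ≤ stopTime X t ω}).toReal
    = ∫ ω, (if h : stopTime X t ω < n then
        min (X ⟨stopTime X t ω, h⟩ ω) (κ ⟨stopTime X t ω, h⟩) else 0) ∂μ := by
  classical
  set τ := stopTime X t with hτ
  have hsetmeas : ∀ m : ℕ, MeasurableSet {ω | m ≤ τ ω} := by
    intro m
    by_cases hm : m ≤ n
    · have : {ω | m ≤ τ ω} = ⋂ j : Fin n, {ω | (j : ℕ) < m → X j ω < t j} := by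
        ext ω; simp [hτ, le_stopTime_iff X t hm ω]
      rw [this]
      refine MeasurableSet.iInter fun j => ?_
      by_cases hj : (j : ℕ) < m
      · simp only [hj, forall_true_left]
        exact measurableSet_lt (hmeas j) measurable_const
      · simp [hj]
    · have : {ω | m ≤ τ ω} = ∅ := by
        ext ω; simp only [Set.mem_setOf_eq, Set.mem_empty_iff_false, iff_false, not_le]
        exact lt_of_le_of_lt (stopTime_le X t ω) (not_le.1 hm)
      simp [this]
  have hτmeas : Measurable τ := by
    refine measurable_to_countable' fun k => ?_
    have : τ ⁻¹' {k} = {ω | k ≤ τ ω} \ {ω | k + 1 ≤ τ ω} := by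
      ext ω; simp only [Set.mem_preimage, Set.mem_singleton_iff, Set.mem_diff,
        Set.mem_setOf_eq, not_le]
      omega
    rw [this]
    exact (hsetmeas k).diff (hsetmeas (k + 1))
  set F : Ω → ℝ := fun ω => if h : τ ω < n then X ⟨τ ω, h⟩ ω else 0 with hF
  set G : Ω → ℝ := fun ω => if h : τ ω < n then
      min (X ⟨τ ω, h⟩ ω) (κ ⟨τ ω, h⟩) else 0 with hG
  have hFeq : F = fun ω => ∑ i : Fin n, if τ ω = (i : ℕ) then X i ω else 0 := by
    funext ω
    by_cases h : τ ω < n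
    · have hs : (∑ i : Fin n, if τ ω = (i : ℕ) then X i ω else 0)
          = if τ ω = ((⟨τ ω, h⟩ : Fin n) : ℕ) then X ⟨τ ω, h⟩ ω else 0 :=
        Finset.sum_eq_single _ (fun b _ hb => if_neg fun hbe => hb (Fin.ext hbe.symm))
          (fun hm => absurd (Finset.mem_univ _) hm)
      simp only [hF, dif_pos h, hs]
      simp
    · have hs : (∑ i : Fin n, if τ ω = (i : ℕ) then X i ω else 0) = 0 :=
        Finset.sum_eq_zero fun i _ => if_neg fun hie => h (by rw [hie]; exact i.isLt)
      simp only [hF, dif_neg h, hs]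
  have hGeq : G = fun ω => ∑ i : Fin n, if τ ω = (i : ℕ) then min (X i ω) (κ i) else 0 := by
    funext ω
    by_cases h : τ ω < n
    · have hs : (∑ i : Fin n, if τ ω = (i : ℕ) then min (X i ω) (κ i) else 0)
          = if τ ω = ((⟨τ ω, h⟩ : Fin n) : ℕ) then min (X ⟨τ ω, h⟩ ω) (κ ⟨τ ω, h⟩) else 0 :=
        Finset.sum_eq_single _ (fun b _ hb => if_neg fun hbe => hb (Fin.ext hbe.symm))
          (fun hm => absurd (Finset.mem_univ _) hm)
      simp only [hG, dif_pos h, hs]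
      simp
    · have hs : (∑ i : Fin n, if τ ω = (i : ℕ) then min (X i ω) (κ i) else 0) = 0 :=
        Finset.sum_eq_zero fun i _ => if_neg fun hie => h (by rw [hie]; exact i.isLt)
      simp only [hG, dif_neg h, hs]
  have hBmeas : ∀ i : Fin n, MeasurableSet {ω | τ ω = (i : ℕ)} := fun i =>
    hτmeas (measurableSet_singleton _)
  have hFint : Integrable F μ := by
    rw [hFeq]
    refine integrable_finset_sum _ fun i _ => ?_
    have : (fun ω => if τ ω = (i : ℕ) then X i ω else 0)
        = Set.indicator {ω | τ ω = (i : ℕ)} (X i) := by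
      funext ω; simp [Set.indicator_apply]
    rw [this]
    exact (hint i).indicator (hBmeas i)
  have hGint : Integrable G μ := by
    rw [hGeq]
    refine integrable_finset_sum _ fun i _ => ?_
    have heq : (fun ω => if τ ω = (i : ℕ) then min (X i ω) (κ i) else 0)
        = Set.indicator {ω | τ ω = (i : ℕ)} (fun ω => min (X i ω) (κ i)) := by
      funext ω; simp [Set.indicator_apply]
    rw [heq]
    have hmin : Integrable (fun ω => min (X i ω) (κ i)) μ := by
      have : (fun ω => min (X i ω) (κ i)) = fun ω => X i ω - max (X i ω - κ i) 0 := by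
        funext ω
        rcases le_total (X i ω) (κ i) with h | h
        · simp [min_eq_left h, max_eq_right (sub_nonpos.2 h)]
        · simp only [min_eq_right h, max_eq_left (sub_nonneg.2 h)]; ring
      rw [this]
      exact (hint i).sub ((hint i).sub (integrable_const (κ i))).pos_part
    exact hmin.indicator (hBmeas i)
  have hpoint : ∀ ω, F ω - G ω
      = ∑ i : Fin n, max (X i ω - κ i) 0 * (if (i : ℕ) ≤ τ ω then 1 else 0) := by
    intro ω
    have hzero : ∀ i : Fin n, (i : ℕ) < τ ω → max (X i ω - κ i) 0 = 0 := by
      intro i hi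
      have hXi : X i ω < t i :=
        (le_stopTime_iff X t (stopTime_le X t ω) ω).1 le_rfl i hi
      exact max_eq_right (sub_nonpos.2 (le_of_lt (lt_of_lt_of_le hXi (ht i))))
    by_cases h : τ ω < n
    · have hsum : (∑ i : Fin n, max (X i ω - κ i) 0 * (if (i : ℕ) ≤ τ ω then 1 else 0))
          = max (X ⟨τ ω, h⟩ ω - κ ⟨τ ω, h⟩) 0
              * (if ((⟨τ ω, h⟩ : Fin n) : ℕ) ≤ τ ω then 1 else 0) := by
        refine Finset.sum_eq_single _ ?_ (fun hm => absurd (Finset.mem_univ _) hm)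
        intro b _ hb
        rcases lt_or_ge (b : ℕ) (τ ω) with hlt | hge
        · rw [hzero b hlt, zero_mul]
        · have hlt' : τ ω < (b : ℕ) := by
            rcases lt_or_eq_of_le hge with h' | h'
            · exact h'
            · exact absurd (Fin.ext h'.symm : b = ⟨τ ω, h⟩) hb
          rw [if_neg (not_le.2 hlt'), mul_zero]
      rw [hsum]
      simp only [hF, hG, dif_pos h, if_pos le_rfl, mul_one]
      rcases le_total (X ⟨τ ω, h⟩ ω) (κ ⟨τ ω, h⟩) with h' | h'
      · simp [min_eq_left h', max_eq_right (sub_nonpos.2 h')]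
      · simp only [min_eq_right h', max_eq_left (sub_nonneg.2 h')]
    · have hτn : τ ω = n := le_antisymm (stopTime_le X t ω) (not_lt.1 h)
      have hsum : (∑ i : Fin n, max (X i ω - κ i) 0 * (if (i : ℕ) ≤ τ ω then 1 else 0)) = 0 :=
        Finset.sum_eq_zero fun i _ => by
          rw [hzero i (by rw [hτn]; exact i.isLt), zero_mul]
      simp only [hF, hG, dif_neg h, hsum, sub_zero]
  -- integral of each summand via independence
  have hkey : ∀ i : Fin n,
      ∫ ω, max (X i ω - κ i) 0 * (if (i : ℕ) ≤ τ ω then 1 else 0) ∂μ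
        = c i * (μ {ω | (i : ℕ) ≤ τ ω}).toReal := by
    intro i
    set T : Finset (Fin n) := Finset.univ.filter (fun j => (j : ℕ) < (i : ℕ)) with hT
    have hdisj : Disjoint ({i} : Finset (Fin n)) T := by
      simp [hT, Finset.disjoint_left]
    have hIF := hindep.indepFun_finset {i} T hdisj hmeas
    set φ : ({x // x ∈ ({i} : Finset (Fin n))} → ℝ) → ℝ :=
      fun v => max (v ⟨i, Finset.mem_singleton_self i⟩ - κ i) 0 with hφ
    set ψ : ({x // x ∈ T} → ℝ) → ℝ :=
      fun v => if ∀ j : {x // x ∈ T}, v j < t j then 1 else 0 with hψ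
    have hφm : Measurable φ :=
      ((measurable_pi_apply _).sub measurable_const).max measurable_const
    have hψset : MeasurableSet {v : {x // x ∈ T} → ℝ | ∀ j, v j < t j} := by
      have : {v : {x // x ∈ T} → ℝ | ∀ j, v j < t j}
          = ⋂ j : {x // x ∈ T}, {v | v j < t j.1} := by ext v; simp
      rw [this]
      exact MeasurableSet.iInter fun j =>
        measurableSet_lt (measurable_pi_apply j) measurable_const
    have hψm : Measurable ψ := Measurable.ite hψset measurable_const measurable_const
    have hI2 := hIF.comp hφm hψm
    have heq1 : (φ ∘ fun a (j : {x // x ∈ ({i} : Finset (Fin n))}) => X j a)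
        = fun a => max (X i a - κ i) 0 := rfl
    have heq2 : (ψ ∘ fun a (j : {x // x ∈ T}) => X j a)
        = fun a => if (i : ℕ) ≤ τ a then (1 : ℝ) else 0 := by
      funext a
      have hiff : (∀ j : {x // x ∈ T}, X j.1 a < t j.1) ↔ (i : ℕ) ≤ τ a := by
        rw [hτ, le_stopTime_iff X t (le_of_lt i.isLt) a]
        constructor
        · intro h j hj
          exact h ⟨j, Finset.mem_filter.2 ⟨Finset.mem_univ _, hj⟩⟩
        · intro h j
          exact h j.1 (Finset.mem_filter.1 j.2).2
      simp only [Function.comp_apply, hψ]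
      by_cases hh : (i : ℕ) ≤ τ a
      · rw [if_pos (hiff.2 hh), if_pos hh]
      · rw [if_neg (fun hx => hh (hiff.1 hx)), if_neg hh]
    rw [heq1, heq2] at hI2
    have hint1 : Integrable (fun a => max (X i a - κ i) 0) μ :=
      ((hint i).sub (integrable_const (κ i))).pos_part
    have hind : (fun a => if (i : ℕ) ≤ τ a then (1 : ℝ) else 0)
        = Set.indicator {ω | (i : ℕ) ≤ τ ω} (fun _ => 1) := by
      funext a; simp [Set.indicator_apply]
    have hint2 : Integrable (fun a => if (i : ℕ) ≤ τ a then (1 : ℝ) else 0) μ := by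
      rw [hind]; exact (integrable_const 1).indicator (hsetmeas i)
    have hmul := IndepFun.integral_mul_eq_mul_integral (μ := μ) (X := fun a => max (X i a - κ i) 0)
      (Y := fun a => if (i : ℕ) ≤ τ a then (1 : ℝ) else 0) hI2
      hint1.aestronglyMeasurable hint2.aestronglyMeasurable
    have hfg : (fun ω => max (X i ω - κ i) 0 * (if (i : ℕ) ≤ τ ω then (1:ℝ) else 0))
        = (fun a => max (X i a - κ i) 0) * (fun a => if (i : ℕ) ≤ τ a then (1:ℝ) else 0) := rfl
    calc ∫ ω, max (X i ω - κ i) 0 * (if (i : ℕ) ≤ τ ω then (1:ℝ) else 0) ∂μ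
        = ∫ ω, ((fun a => max (X i a - κ i) 0)
            * (fun a => if (i : ℕ) ≤ τ a then (1:ℝ) else 0)) ω ∂μ := by rw [← hfg]
      _ = (∫ ω, max (X i ω - κ i) 0 ∂μ)
            * ∫ ω, (if (i : ℕ) ≤ τ ω then (1:ℝ) else 0) ∂μ := hmul
      _ = c i * (μ {ω | (i : ℕ) ≤ τ ω}).toReal := by
            rw [← hc i, hind, integral_indicator_const _ (hsetmeas i), smul_eq_mul, mul_one, measureReal_def]
  have hsub : (∫ ω, F ω ∂μ) - ∫ ω, G ω ∂μ
      = ∑ i : Fin n, c i * (μ {ω | (i : ℕ) ≤ τ ω}).toReal := by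
    rw [← integral_sub hFint hGint]
    calc ∫ ω, F ω - G ω ∂μ
        = ∫ ω, ∑ i : Fin n, max (X i ω - κ i) 0 * (if (i : ℕ) ≤ τ ω then 1 else 0) ∂μ :=
          integral_congr_ae (Filter.Eventually.of_forall hpoint)
      _ = ∑ i : Fin n, ∫ ω, max (X i ω - κ i) 0 * (if (i : ℕ) ≤ τ ω then 1 else 0) ∂μ := by
          refine integral_finset_sum _ fun i _ => ?_
          have hint1 : Integrable (fun a => max (X i a - κ i) 0) μ :=
            ((hint i).sub (integrable_const (κ i))).pos_part
          have heq : (fun ω => max (X i ω - κ i) 0 * (if (i : ℕ) ≤ τ ω then 1 else 0))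
              = Set.indicator {ω | (i : ℕ) ≤ τ ω} (fun ω => max (X i ω - κ i) 0) := by
            funext ω
            by_cases hh : (i : ℕ) ≤ τ ω <;> simp [Set.indicator_apply, hh]
          rw [heq]
          exact hint1.indicator (hsetmeas i)
      _ = ∑ i : Fin n, c i * (μ {ω | (i : ℕ) ≤ τ ω}).toReal :=
          Finset.sum_congr rfl fun i _ => hkey i
  linarith [hsub]
end

section
/- Let X₁,…,Xₙ be random variables each taking values in a finite set V = {v₁,…,v_M} ⊆ [0,∞), with p_{ij} = P(X_i = v_j). Fix S* ⊆ {1,…,n} and a positive integer r, and let M_r(S*) = max_{T ⊆ S*, |T| ≤ r} ∑_{i∈T} X_i denote the sum of the top r values among {X_i}_{i∈S*}. Then there exist reals y_{ij} ∈ [0,1] (1 ≤ i ≤ n, 1 ≤ j ≤ M) such that: y_{ij} = 0 whenever i ∉ S*; y_{ij} ≤ p_{ij} for all i, j; ∑_{i,j} y_{ij} ≤ r; and ∑_{i,j} y_{ij}·v_j = E[M_r(S*)]. In particular, the natural LP relaxation of Top-r ProbeMax has optimal value at least E[M_r(S*)]. -/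
open MeasureTheory

/-- `topRVal X S r ω` is the sum of the top `r` values among `{X i ω}_{i ∈ S}`,
i.e. the maximum of `∑_{i ∈ T} X i ω` over subsets `T ⊆ S` with `|T| ≤ r`. -/
noncomputable def topRVal {Ω : Type*} {n : ℕ} (X : Fin n → Ω → ℝ)
    (S : Finset (Fin n)) (r : ℕ) (ω : Ω) : ℝ :=
  ((S.powerset.filter fun T => T.card ≤ r).image fun T => ∑ i ∈ T, X i ω).max'
    (Finset.image_nonempty.mpr ⟨∅, by simp⟩)

/-- Let `X₁,…,Xₙ` take values in a finite set `V = {v₁,…,v_M} ⊆ [0,∞)`,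
with `p_{ij} = P(Xᵢ = vⱼ)`.  Fix `S* ⊆ {1,…,n}` and `r ≥ 1`, and let `M_r(S*)` be the sum
of the top `r` values among `{Xᵢ}_{i∈S*}`.  Then there exist reals `y_{ij} ∈ [0,1]` with
`y_{ij} = 0` for `i ∉ S*`, `y_{ij} ≤ p_{ij}`, `∑ y_{ij} ≤ r`, and
`∑ y_{ij} vⱼ = E[M_r(S*)]`; in particular the natural LP relaxation of Top-r ProbeMax
has optimal value at least `E[M_r(S*)]`. -/
theorem topR_probemax_lp_feasible {Ω : Type*} [MeasurableSpace Ω]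
    (μ : Measure Ω) [IsProbabilityMeasure μ]
    (n M : ℕ) (X : Fin n → Ω → ℝ) (v : Fin M → ℝ)
    (hv : ∀ j, 0 ≤ v j)
    (hmeas : ∀ i, Measurable (X i))
    (hval : ∀ i ω, ∃ j, X i ω = v j)
    (Sstar : Finset (Fin n)) (r : ℕ) (hr : 0 < r) :
    ∃ y : Fin n → Fin M → ℝ,
      (∀ i j, 0 ≤ y i j ∧ y i j ≤ 1) ∧
      (∀ i j, i ∉ Sstar → y i j = 0) ∧
      (∀ i j, y i j ≤ (μ {ω | X i ω = v j}).toReal) ∧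
      (∑ i : Fin n, ∑ j : Fin M, y i j ≤ r) ∧
      (∑ i : Fin n, ∑ j : Fin M, y i j * v j = ∫ ω, topRVal X Sstar r ω ∂μ) := by
  classical
  set C : Finset (Finset (Fin n)) := Sstar.powerset.filter (fun T => T.card ≤ r) with hCdef
  have hCne : C.Nonempty := ⟨∅, by simp [hCdef]⟩
  have hmaxex : ∀ c : Fin n → Fin M, ∃ T ∈ C, ∀ T' ∈ C,
      ∑ i ∈ T', v (c i) ≤ ∑ i ∈ T, v (c i) := fun c =>
    C.exists_max_image (fun T => ∑ i ∈ T, v (c i)) hCne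
  choose Tsel hTselC hTselMax using hmaxex
  have hTsub : ∀ c, Tsel c ⊆ Sstar := fun c =>
    Finset.mem_powerset.mp (Finset.mem_filter.mp (hTselC c)).1
  have hTcard : ∀ c, (Tsel c).card ≤ r := fun c =>
    (Finset.mem_filter.mp (hTselC c)).2
  -- minimal-index value selector
  have hne : ∀ i ω, (Finset.univ.filter fun j => X i ω = v j).Nonempty := by
    intro i ω
    obtain ⟨j, hj⟩ := hval i ω
    exact ⟨j, by simp [hj]⟩
  set jsel : Fin n → Ω → Fin M :=
    fun i ω => (Finset.univ.filter fun j => X i ω = v j).min' (hne i ω) with hjdef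
  have hjval : ∀ i ω, X i ω = v (jsel i ω) := by
    intro i ω
    have h := Finset.min'_mem _ (hne i ω)
    exact (Finset.mem_filter.mp h).2
  have hjle : ∀ i ω j, X i ω = v j → jsel i ω ≤ j := by
    intro i ω j hj
    exact Finset.min'_le _ _ (by simp [hj])
  have hAmeas : ∀ i j, MeasurableSet {ω | jsel i ω = j} := by
    intro i j
    have hset : {ω | jsel i ω = j} =
        (X i ⁻¹' {v j}) ∩ ⋂ j' ∈ Finset.Iio j, (X i ⁻¹' {v j'})ᶜ := by
      ext ω
      simp only [Set.mem_inter_iff, Set.mem_preimage, Set.mem_singleton_iff,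
        Set.mem_iInter, Set.mem_compl_iff, Finset.mem_Iio, Set.mem_setOf_eq]
      constructor
      · rintro rfl
        exact ⟨hjval i ω, fun j' hj' hx => absurd (hjle i ω j' hx) (not_le.mpr hj')⟩
      · rintro ⟨hx, hlt⟩
        rcases lt_or_eq_of_le (hjle i ω j hx) with h | h
        · exact absurd (hjval i ω) (hlt _ h)
        · exact h
    rw [hset]
    exact ((hmeas i) (measurableSet_singleton _)).inter
      (MeasurableSet.biInter (Finset.Iio j).countable_toSet fun j' _ =>
        ((hmeas i) (measurableSet_singleton _)).compl)
  -- partition of Ω by value profile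
  set P : (Fin n → Fin M) → Set Ω := fun c => {ω | ∀ i, jsel i ω = c i} with hPdef
  have hPmeas : ∀ c, MeasurableSet (P c) := by
    intro c
    have h : P c = ⋂ i, {ω | jsel i ω = c i} := by ext ω; simp [hPdef]
    rw [h]; exact MeasurableSet.iInter fun i => hAmeas i (c i)
  have hPdisj : ∀ c c', c ≠ c' → Disjoint (P c) (P c') := by
    intro c c' hne'
    rw [Set.disjoint_left]
    intro ω h1 h2
    exact hne' (funext fun i => (h1 i).symm.trans (h2 i))
  set m : (Fin n → Fin M) → ℝ := fun c => (μ (P c)).toReal with hmdef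
  have hm0 : ∀ c, 0 ≤ m c := fun c => ENNReal.toReal_nonneg
  have hsum_meas : ∀ s : Finset (Fin n → Fin M),
      ∑ c ∈ s, m c = (μ (⋃ c ∈ s, P c)).toReal := by
    intro s
    rw [measure_biUnion_finset (fun c _ c' _ h => hPdisj c c' h) (fun c _ => hPmeas c),
      ENNReal.toReal_sum (fun c _ => measure_ne_top μ _)]
  have hmsum : ∑ c, m c = 1 := by
    rw [hsum_meas]
    have h : ⋃ c ∈ Finset.univ, P c = Set.univ := by
      ext ω
      simp only [Set.mem_iUnion, Set.mem_univ, iff_true, Finset.mem_univ, exists_true_left]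
      exact ⟨fun i => jsel i ω, fun i => rfl⟩
    rw [h, measure_univ, ENNReal.toReal_one]
  set F : (Fin n → Fin M) → ℝ := fun c => ∑ i ∈ Tsel c, v (c i) with hFdef
  have htop : ∀ ω, topRVal X Sstar r ω = F (fun i => jsel i ω) := by
    intro ω
    set c : Fin n → Fin M := fun i => jsel i ω with hcdef
    have himg : ∀ T, ∑ i ∈ T, X i ω = ∑ i ∈ T, v (c i) :=
      fun T => Finset.sum_congr rfl (fun i _ => hjval i ω)
    unfold topRVal
    apply le_antisymm
    · apply Finset.max'_le
      intro b hb
      obtain ⟨T, hT, rfl⟩ := Finset.mem_image.mp hb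
      rw [himg T]
      exact hTselMax c T hT
    · apply Finset.le_max'
      refine Finset.mem_image.mpr ⟨Tsel c, hTselC c, ?_⟩
      rw [hFdef]
      show ∑ i ∈ Tsel c, X i ω = ∑ i ∈ Tsel c, v (c i)
      exact Finset.sum_congr rfl (fun i _ => hjval i ω)
  have hInt : ∫ ω, topRVal X Sstar r ω ∂μ = ∑ c, F c * m c := by
    have heq : (fun ω => topRVal X Sstar r ω)
        = fun ω => ∑ c, Set.indicator (P c) (fun _ => F c) ω := by
      funext ω
      rw [htop ω, Finset.sum_eq_single (fun i => jsel i ω)]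
      · have hx : ω ∈ P (fun i => jsel i ω) := fun i => rfl
        rw [Set.indicator_of_mem hx]
      · intro c _ hc
        rw [Set.indicator_of_notMem]
        intro hmem
        exact hc (funext fun i => (hmem i).symm)
      · intro h; exact absurd (Finset.mem_univ _) h
    rw [heq, integral_finset_sum]
    · refine Finset.sum_congr rfl fun c _ => ?_
      rw [integral_indicator_const _ (hPmeas c), smul_eq_mul, mul_comm]
      rfl
    · intro c _
      exact (integrable_const (F c)).indicator (hPmeas c)
  -- definition of y
  set y : Fin n → Fin M → ℝ := fun i j =>
    ∑ c ∈ Finset.univ.filter (fun c => i ∈ Tsel c ∧ c i = j), m c with hydef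
  -- per-row reduction
  have hrow : ∀ (i : Fin n) (f : (Fin n → Fin M) → ℝ),
      ∑ j : Fin M, ∑ c ∈ Finset.univ.filter (fun c => i ∈ Tsel c ∧ c i = j), f c
        = ∑ c ∈ Finset.univ.filter (fun c => i ∈ Tsel c), f c := by
    intro i f
    have h : ∀ j : Fin M, Finset.univ.filter (fun c => i ∈ Tsel c ∧ c i = j)
        = (Finset.univ.filter (fun c => i ∈ Tsel c)).filter (fun c => c i = j) := by
      intro j; rw [Finset.filter_filter]
    simp_rw [h]
    exact Finset.sum_fiberwise _ (fun c => c i) f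
  -- swap lemma
  have hswap : ∀ f : Fin n → (Fin n → Fin M) → ℝ,
      ∑ i : Fin n, ∑ c ∈ Finset.univ.filter (fun c => i ∈ Tsel c), f i c
        = ∑ c : Fin n → Fin M, ∑ i ∈ Tsel c, f i c := by
    intro f
    have h1 : ∀ i : Fin n, ∑ c ∈ Finset.univ.filter (fun c => i ∈ Tsel c), f i c
        = ∑ c : Fin n → Fin M, if i ∈ Tsel c then f i c else 0 := by
      intro i; rw [Finset.sum_filter]
    have h2 : ∀ c : Fin n → Fin M, ∑ i : Fin n, (if i ∈ Tsel c then f i c else 0)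
        = ∑ i ∈ Tsel c, f i c := by
      intro c
      rw [← Finset.sum_filter, Finset.filter_univ_mem]
    simp_rw [h1]
    rw [Finset.sum_comm]
    exact Finset.sum_congr rfl fun c _ => h2 c
  refine ⟨y, ?_, ?_, ?_, ?_, ?_⟩
  · -- bounds
    intro i j
    refine ⟨Finset.sum_nonneg fun c _ => hm0 c, ?_⟩
    have h := Finset.sum_le_sum_of_subset_of_nonneg
      (Finset.filter_subset (fun c => i ∈ Tsel c ∧ c i = j) Finset.univ)
      (fun c _ _ => hm0 c)
    exact h.trans_eq hmsum
  · -- zero outside Sstar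
    intro i j hi
    rw [hydef]
    simp only
    rw [Finset.filter_false_of_mem, Finset.sum_empty]
    intro c _ hc
    exact hi (hTsub c hc.1)
  · -- dominated by p_{ij}
    intro i j
    have hstep : y i j ≤ ∑ c ∈ Finset.univ.filter (fun c => c i = j), m c := by
      apply Finset.sum_le_sum_of_subset_of_nonneg
      · intro c hc
        simp only [Finset.mem_filter, Finset.mem_univ, true_and] at hc ⊢
        exact hc.2
      · intro c _ _; exact hm0 c
    have heqm : ∑ c ∈ Finset.univ.filter (fun c => c i = j), m c
        = (μ {ω | jsel i ω = j}).toReal := by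
      rw [hsum_meas]
      congr 2
      ext ω
      simp only [Set.mem_iUnion, Finset.mem_filter, Finset.mem_univ, true_and,
        Set.mem_setOf_eq, exists_prop]
      constructor
      · rintro ⟨c, hci, hw⟩
        rw [hw i, hci]
      · intro hw
        exact ⟨fun i' => jsel i' ω, hw, fun i' => rfl⟩
    have hmono : (μ {ω | jsel i ω = j}).toReal ≤ (μ {ω | X i ω = v j}).toReal := by
      apply ENNReal.toReal_le_toReal (measure_ne_top μ _) (measure_ne_top μ _) |>.mpr
      apply measure_mono
      intro ω hw
      simp only [Set.mem_setOf_eq] at hw ⊢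
      rw [hjval i ω, hw]
    exact hstep.trans (heqm ▸ hmono)
  · -- total mass ≤ r
    have h1 : ∀ i : Fin n, ∑ j : Fin M, y i j
        = ∑ c ∈ Finset.univ.filter (fun c => i ∈ Tsel c), m c := fun i => hrow i m
    calc ∑ i : Fin n, ∑ j : Fin M, y i j
        = ∑ c : Fin n → Fin M, ∑ _i ∈ Tsel c, m c :=
          (Finset.sum_congr rfl fun i _ => h1 i).trans (hswap fun _ c => m c)
      _ = ∑ c : Fin n → Fin M, (Tsel c).card * m c := by
          refine Finset.sum_congr rfl fun c _ => ?_
          rw [Finset.sum_const, nsmul_eq_mul]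
      _ ≤ ∑ c : Fin n → Fin M, (r : ℝ) * m c := by
          refine Finset.sum_le_sum fun c _ => ?_
          exact mul_le_mul_of_nonneg_right (by exact_mod_cast hTcard c) (hm0 c)
      _ = r := by rw [← Finset.mul_sum, hmsum, mul_one]
  · -- value equals expectation
    have h1 : ∀ i : Fin n, ∑ j : Fin M, y i j * v j
        = ∑ c ∈ Finset.univ.filter (fun c => i ∈ Tsel c), m c * v (c i) := by
      intro i
      have h2 : ∀ j : Fin M, y i j * v j
          = ∑ c ∈ Finset.univ.filter (fun c => i ∈ Tsel c ∧ c i = j), m c * v (c i) := by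
        intro j
        rw [hydef]
        simp only
        rw [Finset.sum_mul]
        refine Finset.sum_congr rfl fun c hc => ?_
        simp only [Finset.mem_filter, Finset.mem_univ, true_and] at hc
        rw [hc.2]
      simp_rw [h2]
      exact hrow i (fun c => m c * v (c i))
    calc ∑ i : Fin n, ∑ j : Fin M, y i j * v j
        = ∑ c : Fin n → Fin M, ∑ i ∈ Tsel c, m c * v (c i) :=
          (Finset.sum_congr rfl fun i _ => h1 i).trans (hswap fun i c => m c * v (c i))
      _ = ∑ c, F c * m c := by
          refine Finset.sum_congr rfl fun c _ => ?_
          rw [← Finset.mul_sum, mul_comm, hFdef]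
      _ = ∫ ω, topRVal X Sstar r ω ∂μ := hInt.symm
end
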